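/- arXiv:1707.06563 — 4 statements merged into one kernel-verified Lean document; each statement's English description precedes it below -/
import Mathlib

section
/- Let P₁,…,Pₙ ∈ ℝ⁴ be points (homogeneous coordinates of points in ℙ³), let A₁, A₂ ∈ ℝ^{3×4} be camera matrices, and suppose Xᵢ = A₁Pᵢ and Yᵢ = A₂Pᵢ for all i. Let Z ∈ ℝ^{n×9} be the matrix whose i-th row is the Kronecker product Xᵢ ⊗ Yᵢ, and let V ∈ ℝ^{n×10} be the matrix whose i-th row is the degree-2 Veronese embedding of Pᵢ (the vector of all monomials of degree 2 in the four coordinates of Pᵢ). Then rank(Z) ≤ rank(V). -/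
/-- Degree-2 Veronese embedding of a point of ℝ⁴. -/
def veronese (x : Fin 4 → ℝ) : Fin 10 → ℝ :=
  ![x 0 ^ 2, x 0 * x 1, x 0 * x 2, x 0 * x 3, x 1 ^ 2, x 1 * x 2, x 1 * x 3,
    x 2 ^ 2, x 2 * x 3, x 3 ^ 2]

/-- Coefficient matrix expressing `Z` in terms of the Veronese matrix. -/
def coeffM (A₁ A₂ : Matrix (Fin 3) (Fin 4) ℝ) : Matrix (Fin 10) (Fin 3 × Fin 3) ℝ :=
  fun t jk =>
    let j := jk.1; let k := jk.2
    ![A₁ j 0 * A₂ k 0,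
      A₁ j 0 * A₂ k 1 + A₁ j 1 * A₂ k 0,
      A₁ j 0 * A₂ k 2 + A₁ j 2 * A₂ k 0,
      A₁ j 0 * A₂ k 3 + A₁ j 3 * A₂ k 0,
      A₁ j 1 * A₂ k 1,
      A₁ j 1 * A₂ k 2 + A₁ j 2 * A₂ k 1,
      A₁ j 1 * A₂ k 3 + A₁ j 3 * A₂ k 1,
      A₁ j 2 * A₂ k 2,
      A₁ j 2 * A₂ k 3 + A₁ j 3 * A₂ k 2,
      A₁ j 3 * A₂ k 3] t

lemma sum_univ_ten' {β} [AddCommMonoid β] (f : Fin 10 → β) :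
    ∑ i, f i = f 0 + f 1 + f 2 + f 3 + f 4 + f 5 + f 6 + f 7 + f 8 + f 9 := by
  simp [Fin.sum_univ_succ]
  abel

lemma ver_0 (x : Fin 4 → ℝ) : veronese x 0 = x 0 ^ 2 := rfl
lemma coeffM_0 (A₁ A₂ : Matrix (Fin 3) (Fin 4) ℝ) (j k : Fin 3) :
    coeffM A₁ A₂ 0 (j, k) = A₁ j 0 * A₂ k 0 := rfl
lemma ver_1 (x : Fin 4 → ℝ) : veronese x 1 = x 0 * x 1 := rfl
lemma coeffM_1 (A₁ A₂ : Matrix (Fin 3) (Fin 4) ℝ) (j k : Fin 3) :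
    coeffM A₁ A₂ 1 (j, k) = A₁ j 0 * A₂ k 1 + A₁ j 1 * A₂ k 0 := rfl
lemma ver_2 (x : Fin 4 → ℝ) : veronese x 2 = x 0 * x 2 := rfl
lemma coeffM_2 (A₁ A₂ : Matrix (Fin 3) (Fin 4) ℝ) (j k : Fin 3) :
    coeffM A₁ A₂ 2 (j, k) = A₁ j 0 * A₂ k 2 + A₁ j 2 * A₂ k 0 := rfl
lemma ver_3 (x : Fin 4 → ℝ) : veronese x 3 = x 0 * x 3 := rfl
lemma coeffM_3 (A₁ A₂ : Matrix (Fin 3) (Fin 4) ℝ) (j k : Fin 3) :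
    coeffM A₁ A₂ 3 (j, k) = A₁ j 0 * A₂ k 3 + A₁ j 3 * A₂ k 0 := rfl
lemma ver_4 (x : Fin 4 → ℝ) : veronese x 4 = x 1 ^ 2 := rfl
lemma coeffM_4 (A₁ A₂ : Matrix (Fin 3) (Fin 4) ℝ) (j k : Fin 3) :
    coeffM A₁ A₂ 4 (j, k) = A₁ j 1 * A₂ k 1 := rfl
lemma ver_5 (x : Fin 4 → ℝ) : veronese x 5 = x 1 * x 2 := rfl
lemma coeffM_5 (A₁ A₂ : Matrix (Fin 3) (Fin 4) ℝ) (j k : Fin 3) :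
    coeffM A₁ A₂ 5 (j, k) = A₁ j 1 * A₂ k 2 + A₁ j 2 * A₂ k 1 := rfl
lemma ver_6 (x : Fin 4 → ℝ) : veronese x 6 = x 1 * x 3 := rfl
lemma coeffM_6 (A₁ A₂ : Matrix (Fin 3) (Fin 4) ℝ) (j k : Fin 3) :
    coeffM A₁ A₂ 6 (j, k) = A₁ j 1 * A₂ k 3 + A₁ j 3 * A₂ k 1 := rfl
lemma ver_7 (x : Fin 4 → ℝ) : veronese x 7 = x 2 ^ 2 := rfl
lemma coeffM_7 (A₁ A₂ : Matrix (Fin 3) (Fin 4) ℝ) (j k : Fin 3) :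
    coeffM A₁ A₂ 7 (j, k) = A₁ j 2 * A₂ k 2 := rfl
lemma ver_8 (x : Fin 4 → ℝ) : veronese x 8 = x 2 * x 3 := rfl
lemma coeffM_8 (A₁ A₂ : Matrix (Fin 3) (Fin 4) ℝ) (j k : Fin 3) :
    coeffM A₁ A₂ 8 (j, k) = A₁ j 2 * A₂ k 3 + A₁ j 3 * A₂ k 2 := rfl
lemma ver_9 (x : Fin 4 → ℝ) : veronese x 9 = x 3 ^ 2 := rfl
lemma coeffM_9 (A₁ A₂ : Matrix (Fin 3) (Fin 4) ℝ) (j k : Fin 3) :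
    coeffM A₁ A₂ 9 (j, k) = A₁ j 3 * A₂ k 3 := rfl

theorem rank_Z_le_rank_veronese (n : ℕ) (P : Fin n → Fin 4 → ℝ)
    (A₁ A₂ : Matrix (Fin 3) (Fin 4) ℝ) (X Y : Fin n → Fin 3 → ℝ)
    (hX : ∀ i, X i = A₁.mulVec (P i)) (hY : ∀ i, Y i = A₂.mulVec (P i))
    (Z : Matrix (Fin n) (Fin 3 × Fin 3) ℝ)
    (hZ : ∀ i jk, Z i jk = X i jk.1 * Y i jk.2)
    (V : Matrix (Fin n) (Fin 10) ℝ) (hV : ∀ i, V i = veronese (P i)) :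
    Z.rank ≤ V.rank := by
  have hfac : Z = V * coeffM A₁ A₂ := by
    funext i jk
    obtain ⟨j, k⟩ := jk
    rw [Matrix.mul_apply, hZ, hX, hY, hV, sum_univ_ten']
    simp only [ver_0, ver_1, ver_2, ver_3, ver_4, ver_5, ver_6, ver_7, ver_8, ver_9,
               coeffM_0, coeffM_1, coeffM_2, coeffM_3, coeffM_4, coeffM_5, coeffM_6,
               coeffM_7, coeffM_8, coeffM_9, Matrix.mulVec, dotProduct,
               Fin.sum_univ_four]
    ring
  rw [hfac]
  exact Matrix.rank_mul_le_left V (coeffM A₁ A₂)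
end

section
/- Let P₁,…,P₈ ∈ ℝ³ be the eight vertices of a combinatorial cube, i.e., eight points such that each of the six quadruples of points corresponding to the faces of a cube (with the standard cube's vertex-facet incidences) is coplanar. Then the 8×10 matrix whose rows are the degree-2 Veronese embeddings of the homogenizations (Pᵢ, 1) ∈ ℝ⁴ has rank at most 7. -/
open Matrix

/-- Homogenization of a point of ℝ³. -/
def hom3 (p : Fin 3 → ℝ) : Fin 4 → ℝ := ![p 0, p 1, p 2, 1]

def dot4 (l x : Fin 4 → ℝ) : ℝ := l 0 * x 0 + l 1 * x 1 + l 2 * x 2 + l 3 * x 3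

def quad (l m : Fin 4 → ℝ) : Fin 10 → ℝ :=
  ![l 0 * m 0, l 0 * m 1 + l 1 * m 0, l 0 * m 2 + l 2 * m 0, l 0 * m 3 + l 3 * m 0,
    l 1 * m 1, l 1 * m 2 + l 2 * m 1, l 1 * m 3 + l 3 * m 1,
    l 2 * m 2, l 2 * m 3 + l 3 * m 2, l 3 * m 3]

lemma quad_eval (l m x : Fin 4 → ℝ) :
    ∑ k, veronese x k * quad l m k = dot4 l x * dot4 m x := by
  simp [Fin.sum_univ_succ, veronese, quad, dot4]
  ring

lemma dot4_add (p x y : Fin 4 → ℝ) : dot4 p (x + y) = dot4 p x + dot4 p y := by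
  simp [dot4, Pi.add_apply]; ring

lemma dot4_mix (p x z : Fin 4 → ℝ) (a : ℝ) :
    dot4 p (fun j => x j - a * z j) = dot4 p x - a * dot4 p z := by
  simp [dot4]; ring

lemma dot4_mixl (p q x : Fin 4 → ℝ) (a : ℝ) :
    dot4 (fun j => p j - a * q j) x = dot4 p x - a * dot4 q x := by
  simp [dot4]; ring

/-- A vector space over ℝ is not the union of two proper "subspaces" (kernel version). -/
lemma V1 (S : Set (Fin 4 → ℝ)) (hS : ∀ x ∈ S, ∀ y ∈ S, x + y ∈ S)
    (p q : Fin 4 → ℝ) (h : ∀ x ∈ S, dot4 p x = 0 ∨ dot4 q x = 0) :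
    (∀ x ∈ S, dot4 p x = 0) ∨ (∀ x ∈ S, dot4 q x = 0) := by
  by_contra hh
  push_neg at hh
  obtain ⟨⟨a, ha, hpa⟩, ⟨b, hb, hqb⟩⟩ := hh
  have hqa : dot4 q a = 0 := (h a ha).resolve_left hpa
  have hpb : dot4 p b = 0 := by
    rcases h b hb with h' | h'
    · exact h'
    · exact absurd h' hqb
  rcases h (a + b) (hS a ha b hb) with h' | h'
  · rw [dot4_add, hpb, add_zero] at h'; exact hpa h'
  · rw [dot4_add, hqa, zero_add] at h'; exact hqb h'

lemma V2'' (c p : Fin 4 → ℝ) (h : ∀ x, dot4 c x = 0 → dot4 p x = 0) :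
    ∃ s : ℝ, ∀ x, dot4 p x = s * dot4 c x := by
  by_cases hc : ∀ x, dot4 c x = 0
  · exact ⟨0, fun x => by rw [h x (hc x), hc x, mul_zero]⟩
  · push_neg at hc
    obtain ⟨z, hz⟩ := hc
    refine ⟨dot4 p z / dot4 c z, fun x => ?_⟩
    have hy : dot4 c (fun j => x j - (dot4 c x / dot4 c z) * z j) = 0 := by
      rw [dot4_mix]; field_simp; ring
    have := h _ hy
    rw [dot4_mix] at this
    field_simp at this ⊢
    linarith [this]

lemma V2' (b c p : Fin 4 → ℝ)
    (h : ∀ x, dot4 c x = 0 → dot4 b x = 0 → dot4 p x = 0) :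
    ∃ t s : ℝ, ∀ x, dot4 p x = t * dot4 b x + s * dot4 c x := by
  by_cases hb : ∀ x, dot4 c x = 0 → dot4 b x = 0
  · obtain ⟨s, hs⟩ := V2'' c p (fun x hc => h x hc (hb x hc))
    exact ⟨0, s, fun x => by rw [hs]; ring⟩
  · push_neg at hb
    obtain ⟨z, hcz, hbz⟩ := hb
    have key : ∀ x, dot4 c x = 0 → dot4 (fun j => p j - (dot4 p z / dot4 b z) * b j) x = 0 := by
      intro x hcx
      have hy : dot4 c (fun j => x j - (dot4 b x / dot4 b z) * z j) = 0 := by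
        rw [dot4_mix, hcx, hcz]; ring
      have hy2 : dot4 b (fun j => x j - (dot4 b x / dot4 b z) * z j) = 0 := by
        rw [dot4_mix]; field_simp; ring
      have := h _ hy hy2
      rw [dot4_mix] at this
      rw [dot4_mixl]
      field_simp at this ⊢
      linarith [this]
    obtain ⟨s, hs⟩ := V2'' c _ key
    refine ⟨dot4 p z / dot4 b z, s, fun x => ?_⟩
    have := hs x
    rw [dot4_mixl] at this
    linarith [this]

lemma nz_sum (p : Fin 4 → ℝ) (hp : ¬ ∀ x, dot4 p x = 0) : ∃ x, dot4 p x ≠ 0 := by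
  push_neg at hp; exact hp

lemma nzmul (p q : Fin 4 → ℝ) (hp : ∃ x, dot4 p x ≠ 0) (hq : ∃ x, dot4 q x ≠ 0) :
    ∃ x, dot4 p x * dot4 q x ≠ 0 := by
  by_contra h
  push_neg at h
  rcases V1 Set.univ (fun _ _ _ _ => trivial) p q
      (fun x _ => mul_eq_zero.1 (h x)) with h' | h'
  · obtain ⟨x, hx⟩ := hp; exact hx (h' x trivial)
  · obtain ⟨x, hx⟩ := hq; exact hx (h' x trivial)

/-- Main "UFD-like" factorization lemma, purely via linear algebra. -/
lemma UFD (p q l m : Fin 4 → ℝ)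
    (h : ∀ x, dot4 p x * dot4 q x = dot4 l x * dot4 m x)
    (hpq : ∃ x, dot4 p x * dot4 q x ≠ 0) :
    (∃ t : ℝ, t ≠ 0 ∧ ∀ x, dot4 p x = t * dot4 l x) ∨
    (∃ t : ℝ, t ≠ 0 ∧ ∀ x, dot4 q x = t * dot4 l x) := by
  have hadd : ∀ x ∈ {x : Fin 4 → ℝ | dot4 l x = 0}, ∀ y ∈ {x | dot4 l x = 0},
      x + y ∈ {x | dot4 l x = 0} := by
    intro x hx y hy
    simp only [Set.mem_setOf_eq] at *
    rw [dot4_add, hx, hy, add_zero]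
  have hzero : ∀ x ∈ {x : Fin 4 → ℝ | dot4 l x = 0}, dot4 p x = 0 ∨ dot4 q x = 0 := by
    intro x hx
    simp only [Set.mem_setOf_eq] at hx
    exact mul_eq_zero.1 (by rw [h x, hx, zero_mul])
  rcases V1 _ hadd p q hzero with h' | h'
  · obtain ⟨t, ht⟩ := V2'' l p (fun x hx => h' x hx)
    refine Or.inl ⟨t, fun ht0 => ?_, ht⟩
    obtain ⟨x, hx⟩ := hpq
    exact hx (by rw [ht x, ht0, zero_mul, zero_mul])
  · obtain ⟨t, ht⟩ := V2'' l q (fun x hx => h' x hx)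
    refine Or.inr ⟨t, fun ht0 => ?_, ht⟩
    obtain ⟨x, hx⟩ := hpq
    exact hx (by rw [ht x, ht0, zero_mul, mul_zero])

lemma nz_of_ne (v : Fin 4 → ℝ) (hv : v ≠ 0) : ∃ x, dot4 v x ≠ 0 := by
  by_contra h
  push_neg at h
  apply hv
  funext j
  fin_cases j
  · simpa [dot4] using h ![1,0,0,0]
  · simpa [dot4] using h ![0,1,0,0]
  · simpa [dot4] using h ![0,0,1,0]
  · simpa [dot4] using h ![0,0,0,1]

lemma face_form (x0 x1 x2 x3 : Fin 4 → ℝ) (h : (Matrix.of ![x0, x1, x2, x3]).det = 0) :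
    ∃ l, (∃ x, dot4 l x ≠ 0) ∧ dot4 l x0 = 0 ∧ dot4 l x1 = 0 ∧ dot4 l x2 = 0 ∧ dot4 l x3 = 0 := by
  obtain ⟨v, hv0, hv⟩ := (Matrix.exists_mulVec_eq_zero_iff).2 h
  have hnz : ∃ x, dot4 v x ≠ 0 := by
    by_contra hc
    push_neg at hc
    apply hv0; funext j
    fin_cases j
    · simpa [dot4] using hc ![1,0,0,0]
    · simpa [dot4] using hc ![0,1,0,0]
    · simpa [dot4] using hc ![0,0,1,0]
    · simpa [dot4] using hc ![0,0,0,1]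
  refine ⟨v, hnz, ?_, ?_, ?_, ?_⟩
  · have := congrFun hv 0
    simp [Matrix.mulVec, dotProduct, Fin.sum_univ_four] at this
    simp [dot4]; linarith [this]
  · have := congrFun hv 1
    simp [Matrix.mulVec, dotProduct, Fin.sum_univ_four] at this
    simp [dot4]; linarith [this]
  · have := congrFun hv 2
    simp [Matrix.mulVec, dotProduct, Fin.sum_univ_four] at this
    simp [dot4]; linarith [this]
  · have := congrFun hv 3
    simp [Matrix.mulVec, dotProduct, Fin.sum_univ_four] at this
    simp [dot4]; linarith [this]

def dotMap (w : Fin 4 → ℝ) : (Fin 4 → ℝ) →ₗ[ℝ] ℝ where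
  toFun l := dot4 l w
  map_add' := by intros; simp [dot4]; ring
  map_smul' := by intros; simp [dot4]; ring

lemma perp2 (u v : Fin 4 → ℝ) :
    ∃ m1 m2 : Fin 4 → ℝ,
      (dot4 m1 u = 0 ∧ dot4 m1 v = 0 ∧ dot4 m2 u = 0 ∧ dot4 m2 v = 0) ∧
      ∀ a b : ℝ, (∀ j, a * m1 j + b * m2 j = 0) → a = 0 ∧ b = 0 := by
  set T : (Fin 4 → ℝ) →ₗ[ℝ] (Fin 2 → ℝ) := LinearMap.pi ![dotMap u, dotMap v] with hT
  have hrange : Module.finrank ℝ (LinearMap.range T) ≤ 2 := by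
    have := Submodule.finrank_le (LinearMap.range T)
    simpa using this
  have hker : 2 ≤ Module.finrank ℝ (LinearMap.ker T) := by
    have h4 : Module.finrank ℝ (Fin 4 → ℝ) = 4 := by simp
    have := LinearMap.finrank_range_add_finrank_ker T
    omega
  obtain ⟨f, hf⟩ := exists_linearIndependent_of_le_finrank (R := ℝ) (M := LinearMap.ker T) hker
  refine ⟨(f 0 : _), (f 1 : _), ⟨?_, ?_, ?_, ?_⟩, ?_⟩
  · have := (f 0).2
    rw [LinearMap.mem_ker] at this
    simpa [hT, dotMap] using congrFun this 0
  · have := (f 0).2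
    rw [LinearMap.mem_ker] at this
    simpa [hT, dotMap] using congrFun this 1
  · have := (f 1).2
    rw [LinearMap.mem_ker] at this
    simpa [hT, dotMap] using congrFun this 0
  · have := (f 1).2
    rw [LinearMap.mem_ker] at this
    simpa [hT, dotMap] using congrFun this 1
  · intro a b hab
    have hsum : ![a, b] 0 • f 0 + ![a, b] 1 • f 1 = 0 := by
      apply Subtype.ext
      simp only [Submodule.coe_add, Submodule.coe_smul, Submodule.coe_zero]
      funext j
      simpa using hab j
    have := Fintype.linearIndependent_iff.mp hf ![a, b] (by rw [Fin.sum_univ_two]; exact hsum)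
    exact ⟨by simpa using this 0, by simpa using this 1⟩

lemma final (V : Matrix (Fin 8) (Fin 10) ℝ) (w : Fin 8 → Fin 4 → ℝ)
    (hVw : ∀ i, V i = veronese (w i)) (p1 q1 p2 q2 p3 q3 : Fin 4 → ℝ)
    (g1 : ∀ i, dot4 p1 (w i) * dot4 q1 (w i) = 0)
    (g2 : ∀ i, dot4 p2 (w i) * dot4 q2 (w i) = 0)
    (g3 : ∀ i, dot4 p3 (w i) * dot4 q3 (w i) = 0)
    (hind : ∀ a b c : ℝ,
      (∀ k, a * quad p1 q1 k + b * quad p2 q2 k + c * quad p3 q3 k = 0) →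
      a = 0 ∧ b = 0 ∧ c = 0) :
    V.rank ≤ 7 := by
  have mem : ∀ (p q : Fin 4 → ℝ), (∀ i, dot4 p (w i) * dot4 q (w i) = 0) →
      quad p q ∈ LinearMap.ker V.mulVecLin := by
    intro p q hg
    rw [LinearMap.mem_ker]
    rw [Matrix.mulVecLin_apply]
    funext i
    rw [Matrix.mulVec, Pi.zero_apply]
    have : (fun j => V i j) = veronese (w i) := by rw [← hVw i]
    calc V i ⬝ᵥ quad p q = ∑ k, veronese (w i) k * quad p q k := by
          rw [dotProduct]; rw [hVw i]
      _ = 0 := by rw [quad_eval]; exact hg i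
  set K := LinearMap.ker V.mulVecLin with hK
  set u : Fin 3 → K := ![⟨quad p1 q1, mem _ _ g1⟩, ⟨quad p2 q2, mem _ _ g2⟩,
    ⟨quad p3 q3, mem _ _ g3⟩] with hu
  have hli : LinearIndependent ℝ u := by
    rw [Fintype.linearIndependent_iff]
    intro g hg
    have hval : g 0 • quad p1 q1 + g 1 • quad p2 q2 + g 2 • quad p3 q3 = 0 := by
      have := congrArg (Subtype.val) hg
      rw [Fin.sum_univ_three] at this
      simpa [hu] using this
    have := hind (g 0) (g 1) (g 2) (by
      intro k
      have := congrFun hval k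
      simpa using this)
    intro i; fin_cases i
    · exact this.1
    · exact this.2.1
    · exact this.2.2
  have hcard : 3 ≤ Module.finrank ℝ K := by
    simpa using hli.fintype_card_le_finrank
  have h10 : Module.finrank ℝ (Fin 10 → ℝ) = 10 := by simp
  have hrn := LinearMap.finrank_range_add_finrank_ker V.mulVecLin
  rw [← hK, h10] at hrn
  rw [Matrix.rank]
  omega

lemma dot4_combo2 (m1 m2 x : Fin 4 → ℝ) (a b : ℝ) :
    dot4 (fun j => a * m1 j + b * m2 j) x = a * dot4 m1 x + b * dot4 m2 x := by
  simp [dot4]; ring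

lemma dot4_combo3 (m1 m2 m3 x : Fin 4 → ℝ) (a b c : ℝ) :
    dot4 (fun j => a * m1 j + b * m2 j + c * m3 j) x
      = a * dot4 m1 x + b * dot4 m2 x + c * dot4 m3 x := by
  simp [dot4]; ring

lemma eval3 (p1 q1 p2 q2 p3 q3 : Fin 4 → ℝ) (a b c : ℝ)
    (h : ∀ k, a * quad p1 q1 k + b * quad p2 q2 k + c * quad p3 q3 k = 0) (x : Fin 4 → ℝ) :
    a * (dot4 p1 x * dot4 q1 x) + b * (dot4 p2 x * dot4 q2 x)
      + c * (dot4 p3 x * dot4 q3 x) = 0 := by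
  have hsum : ∑ k, veronese x k *
      (a * quad p1 q1 k + b * quad p2 q2 k + c * quad p3 q3 k)
      = a * (∑ k, veronese x k * quad p1 q1 k)
        + b * (∑ k, veronese x k * quad p2 q2 k)
        + c * (∑ k, veronese x k * quad p3 q3 k) := by
    rw [Finset.mul_sum, Finset.mul_sum, Finset.mul_sum, ← Finset.sum_add_distrib,
      ← Finset.sum_add_distrib]
    apply Finset.sum_congr rfl
    intros; ring
  have hz : ∑ k, veronese x k *
      (a * quad p1 q1 k + b * quad p2 q2 k + c * quad p3 q3 k) = 0 := by
    apply Finset.sum_eq_zero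
    intro k _
    rw [h k, mul_zero]
  rw [hsum, quad_eval, quad_eval, quad_eval] at hz
  exact hz

/-- Terminal case: a nonzero form vanishing at 7 of the 8 points. -/
lemma seven (V : Matrix (Fin 8) (Fin 10) ℝ) (w : Fin 8 → Fin 4 → ℝ)
    (hVw : ∀ i, V i = veronese (w i)) (hw3 : ∀ i, w i 3 = 1)
    (l : Fin 4 → ℝ) (k : Fin 8) (hl : ∃ x, dot4 l x ≠ 0)
    (hlz : ∀ i, i ≠ k → dot4 l (w i) = 0) : V.rank ≤ 7 := by
  set m1 : Fin 4 → ℝ := ![1, 0, 0, -(w k 0)] with hm1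
  set m2 : Fin 4 → ℝ := ![0, 1, 0, -(w k 1)] with hm2
  set m3 : Fin 4 → ℝ := ![0, 0, 1, -(w k 2)] with hm3
  have hmk : dot4 m1 (w k) = 0 ∧ dot4 m2 (w k) = 0 ∧ dot4 m3 (w k) = 0 := by
    refine ⟨?_, ?_, ?_⟩ <;> simp [dot4, hm1, hm2, hm3, hw3 k]
  have good : ∀ (m : Fin 4 → ℝ), dot4 m (w k) = 0 →
      ∀ i, dot4 l (w i) * dot4 m (w i) = 0 := by
    intro m hm i
    by_cases hik : i = k
    · rw [hik, hm, mul_zero]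
    · rw [hlz i hik, zero_mul]
  apply final V w hVw l m1 l m2 l m3 (good m1 hmk.1) (good m2 hmk.2.1) (good m3 hmk.2.2)
  intro a b c h
  have hev := eval3 l m1 l m2 l m3 a b c h
  have hprod : ∀ x, dot4 l x * dot4 (fun j => a * m1 j + b * m2 j + c * m3 j) x = 0 := by
    intro x
    rw [dot4_combo3]
    have := hev x
    ring_nf
    ring_nf at this
    linarith [this]
  rcases V1 Set.univ (fun _ _ _ _ => trivial) l _ (fun x _ => mul_eq_zero.1 (hprod x))
    with h' | h'
  · obtain ⟨x, hx⟩ := hl; exact absurd (h' x trivial) hx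
  · refine ⟨?_, ?_, ?_⟩
    · simpa [dot4, hm1, hm2, hm3] using h' ![1,0,0,0] trivial
    · simpa [dot4, hm1, hm2, hm3] using h' ![0,1,0,0] trivial
    · simpa [dot4, hm1, hm2, hm3] using h' ![0,0,1,0] trivial

/-- Terminal case: a nonzero form vanishing at 6 of the 8 points, plus a compatible
third product quadric. -/
lemma endgame (V : Matrix (Fin 8) (Fin 10) ℝ) (w : Fin 8 → Fin 4 → ℝ)
    (hVw : ∀ i, V i = veronese (w i)) (hw3 : ∀ i, w i 3 = 1)
    (l r0 r1 : Fin 4 → ℝ) (j k : Fin 8)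
    (hl : ∃ x, dot4 l x ≠ 0) (hr0 : ∃ x, dot4 r0 x ≠ 0) (hr1 : ∃ x, dot4 r1 x ≠ 0)
    (hlz : ∀ i, i ≠ j → i ≠ k → dot4 l (w i) = 0)
    (hr : ∀ i, dot4 r0 (w i) * dot4 r1 (w i) = 0)
    (h3 : dot4 r0 (w j) = 0 ∨ dot4 r0 (w k) = 0)
    (h4 : dot4 r1 (w j) = 0 ∨ dot4 r1 (w k) = 0) : V.rank ≤ 7 := by
  by_cases hprop : (∃ t, ∀ x, dot4 r0 x = t * dot4 l x) ∨ (∃ t, ∀ x, dot4 r1 x = t * dot4 l x)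
  · -- one of r0, r1 is proportional to l, so l vanishes at 7 points
    have key : ∀ (r : Fin 4 → ℝ), (∃ x, dot4 r x ≠ 0) →
        (∃ t, ∀ x, dot4 r x = t * dot4 l x) →
        (dot4 r (w j) = 0 ∨ dot4 r (w k) = 0) → V.rank ≤ 7 := by
      intro r hrnz ⟨t, ht⟩ h34
      have ht0 : t ≠ 0 := by
        intro h0
        obtain ⟨x, hx⟩ := hrnz
        exact hx (by rw [ht x, h0, zero_mul])
      rcases h34 with hj | hk
      · -- l vanishes at w j too, so at everything except k
        apply seven V w hVw hw3 l k hl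
        intro i hik
        by_cases hij : i = j
        · subst hij
          have := ht (w i)
          rw [hj] at this
          exact (mul_eq_zero.1 this.symm).resolve_left ht0
        · exact hlz i hij hik
      · apply seven V w hVw hw3 l j hl
        intro i hij
        by_cases hik : i = k
        · subst hik
          have := ht (w i)
          rw [hk] at this
          exact (mul_eq_zero.1 this.symm).resolve_left ht0
        · exact hlz i hij hik
    rcases hprop with h | h
    · exact key r0 hr0 h h3
    · exact key r1 hr1 h h4
  · obtain ⟨m1, m2, ⟨e1, e2, e3, e4⟩, hli2⟩ := perp2 (w j) (w k)
    have good : ∀ (m : Fin 4 → ℝ), dot4 m (w j) = 0 → dot4 m (w k) = 0 →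
        ∀ i, dot4 l (w i) * dot4 m (w i) = 0 := by
      intro m hmj hmk i
      by_cases hij : i = j
      · rw [hij, hmj, mul_zero]
      · by_cases hik : i = k
        · rw [hik, hmk, mul_zero]
        · rw [hlz i hij hik, zero_mul]
    apply final V w hVw l m1 l m2 r0 r1 (good m1 e1 e2) (good m2 e3 e4) hr
    intro a b c h
    have hev := eval3 l m1 l m2 r0 r1 a b c h
    by_cases hc : c = 0
    · subst hc
      have hprod : ∀ x, dot4 l x * dot4 (fun j' => a * m1 j' + b * m2 j') x = 0 := by
        intro x
        rw [dot4_combo2]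
        have := hev x
        ring_nf
        ring_nf at this
        linarith [this]
      rcases V1 Set.univ (fun _ _ _ _ => trivial) l _ (fun x _ => mul_eq_zero.1 (hprod x))
        with h' | h'
      · obtain ⟨x, hx⟩ := hl; exact absurd (h' x trivial) hx
      · have hM : ∀ j', a * m1 j' + b * m2 j' = 0 := by
          intro j'
          fin_cases j'
          · simpa [dot4] using h' ![1,0,0,0] trivial
          · simpa [dot4] using h' ![0,1,0,0] trivial
          · simpa [dot4] using h' ![0,0,1,0] trivial
          · simpa [dot4] using h' ![0,0,0,1] trivial
        obtain ⟨ha, hb⟩ := hli2 a b hM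
        exact ⟨ha, hb, rfl⟩
    · exfalso
      have hufd : ∀ x, dot4 r0 x * dot4 r1 x
          = dot4 l x * dot4 (fun j' => (-(a/c)) * m1 j' + (-(b/c)) * m2 j') x := by
        intro x
        rw [dot4_combo2]
        field_simp
        linear_combination hev x
      rcases UFD r0 r1 l _ hufd (nzmul r0 r1 hr0 hr1) with ⟨t, _, ht⟩ | ⟨t, _, ht⟩
      · exact hprop (Or.inl ⟨t, ht⟩)
      · exact hprop (Or.inr ⟨t, ht⟩)

lemma cancel_left {a v : ℝ} (ha : a ≠ 0) (h : a * v = 0) : v = 0 :=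
  (mul_eq_zero.1 h).resolve_left ha

lemma dot4_smul (t : ℝ) (m x : Fin 4 → ℝ) :
    dot4 (fun j => t * m j) x = t * dot4 m x := by
  simp [dot4]; ring

/-- Eight points of ℝ³ form a combinatorial cube: each of the six quadruples
corresponding to the facets of the standard cube is coplanar. -/
def IsCombinatorialCube (P : Fin 8 → Fin 3 → ℝ) : Prop :=
  (Matrix.of ![hom3 (P 0), hom3 (P 1), hom3 (P 2), hom3 (P 3)]).det = 0 ∧
  (Matrix.of ![hom3 (P 4), hom3 (P 5), hom3 (P 6), hom3 (P 7)]).det = 0 ∧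
  (Matrix.of ![hom3 (P 0), hom3 (P 3), hom3 (P 4), hom3 (P 7)]).det = 0 ∧
  (Matrix.of ![hom3 (P 1), hom3 (P 2), hom3 (P 5), hom3 (P 6)]).det = 0 ∧
  (Matrix.of ![hom3 (P 0), hom3 (P 2), hom3 (P 5), hom3 (P 7)]).det = 0 ∧
  (Matrix.of ![hom3 (P 1), hom3 (P 3), hom3 (P 4), hom3 (P 6)]).det = 0

theorem veronese_rank_le_seven_of_combinatorial_cube
    (P : Fin 8 → Fin 3 → ℝ) (hP : IsCombinatorialCube P)
    (V : Matrix (Fin 8) (Fin 10) ℝ) (hV : ∀ i, V i = veronese (hom3 (P i))) :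
    V.rank ≤ 7 := by
  obtain ⟨d1, d2, d3, d4, d5, d6⟩ := hP
  set w : Fin 8 → Fin 4 → ℝ := fun i => hom3 (P i) with hw
  have hVw : ∀ i, V i = veronese (w i) := hV
  have hw3 : ∀ i, w i 3 = 1 := by intro i; simp [hw, hom3]
  obtain ⟨a0, a0nz, za0_0, za0_1, za0_2, za0_3⟩ := face_form _ _ _ _ d1
  obtain ⟨a1, a1nz, za1_4, za1_5, za1_6, za1_7⟩ := face_form _ _ _ _ d2
  obtain ⟨b0, b0nz, zb0_0, zb0_3, zb0_4, zb0_7⟩ := face_form _ _ _ _ d3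
  obtain ⟨b1, b1nz, zb1_1, zb1_2, zb1_5, zb1_6⟩ := face_form _ _ _ _ d4
  obtain ⟨c0, c0nz, zc0_0, zc0_2, zc0_5, zc0_7⟩ := face_form _ _ _ _ d5
  obtain ⟨c1, c1nz, zc1_1, zc1_3, zc1_4, zc1_6⟩ := face_form _ _ _ _ d6
  -- products vanish at all eight points
  have gA : ∀ i, dot4 a0 (w i) * dot4 a1 (w i) = 0 := by
    intro i
    fin_cases i
    · exact mul_eq_zero_of_left za0_0 _
    · exact mul_eq_zero_of_left za0_1 _
    · exact mul_eq_zero_of_left za0_2 _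
    · exact mul_eq_zero_of_left za0_3 _
    · exact mul_eq_zero_of_right _ za1_4
    · exact mul_eq_zero_of_right _ za1_5
    · exact mul_eq_zero_of_right _ za1_6
    · exact mul_eq_zero_of_right _ za1_7
  have gB : ∀ i, dot4 b0 (w i) * dot4 b1 (w i) = 0 := by
    intro i
    fin_cases i
    · exact mul_eq_zero_of_left zb0_0 _
    · exact mul_eq_zero_of_right _ zb1_1
    · exact mul_eq_zero_of_right _ zb1_2
    · exact mul_eq_zero_of_left zb0_3 _
    · exact mul_eq_zero_of_left zb0_4 _
    · exact mul_eq_zero_of_right _ zb1_5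
    · exact mul_eq_zero_of_right _ zb1_6
    · exact mul_eq_zero_of_left zb0_7 _
  have gC : ∀ i, dot4 c0 (w i) * dot4 c1 (w i) = 0 := by
    intro i
    fin_cases i
    · exact mul_eq_zero_of_left zc0_0 _
    · exact mul_eq_zero_of_right _ zc1_1
    · exact mul_eq_zero_of_left zc0_2 _
    · exact mul_eq_zero_of_right _ zc1_3
    · exact mul_eq_zero_of_right _ zc1_4
    · exact mul_eq_zero_of_left zc0_5 _
    · exact mul_eq_zero_of_right _ zc1_6
    · exact mul_eq_zero_of_left zc0_7 _
  by_cases hind : ∀ α β γ : ℝ,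
      (∀ k, α * quad a0 a1 k + β * quad b0 b1 k + γ * quad c0 c1 k = 0) →
      α = 0 ∧ β = 0 ∧ γ = 0
  · exact final V w hVw a0 a1 b0 b1 c0 c1 gA gB gC hind
  · push_neg at hind
    obtain ⟨α, β, γ, hrel, hne⟩ := hind
    have hev := eval3 a0 a1 b0 b1 c0 c1 α β γ hrel
    by_cases hγ : γ = 0
    · by_cases hβ : β = 0
      · -- only α nonzero: impossible
        subst hβ; subst hγ
        have hα : α ≠ 0 := fun h => hne h rfl rfl
        exfalso
        obtain ⟨x, hx⟩ := nzmul a0 a1 a0nz a1nz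
        have h0 := hev x
        apply hx
        have h1 : α * (dot4 a0 x * dot4 a1 x) = 0 := by linarith [h0]
        exact cancel_left hα h1
      · by_cases hα : α = 0
        · -- only β nonzero: impossible
          subst hα; subst hγ
          exfalso
          obtain ⟨x, hx⟩ := nzmul b0 b1 b0nz b1nz
          have h0 := hev x
          apply hx
          have h1 : β * (dot4 b0 x * dot4 b1 x) = 0 := by linarith [h0]
          exact cancel_left hβ h1
        · -- two-term case (A,B)
          subst hγ
          have a1nzs : ∃ x, dot4 (fun j => α * a1 j) x ≠ 0 := by
            obtain ⟨x, hx⟩ := a1nz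
            exact ⟨x, by rw [dot4_smul]; exact mul_ne_zero hα hx⟩
          have hid : ∀ x, dot4 a0 x * dot4 (fun j => α * a1 j) x
              = dot4 b0 x * dot4 (fun j => -β * b1 j) x := by
            intro x
            rw [dot4_smul, dot4_smul]
            linear_combination hev x
          rcases UFD a0 _ b0 _ hid (nzmul a0 _ a0nz a1nzs) with ⟨t, ht0, ht⟩ | ⟨t, ht0, ht⟩
          · -- a0 = t b0 : vanishes off {5,6}
            refine endgame V w hVw hw3 a0 c0 c1 5 6 a0nz c0nz c1nz ?_ gC
              (Or.inl zc0_5) (Or.inr zc1_6)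
            intro i hj hk
            fin_cases i
            · exact za0_0
            · exact za0_1
            · exact za0_2
            · exact za0_3
            · exact (ht (hom3 (P 4))).trans (by rw [zb0_4, mul_zero])
            · exact absurd rfl hj
            · exact absurd rfl hk
            · exact (ht (hom3 (P 7))).trans (by rw [zb0_7, mul_zero])
          · -- a1 = (t/α) b0 : vanishes off {1,2}
            have ht' : ∀ x, α * dot4 a1 x = t * dot4 b0 x := by
              intro x; rw [← dot4_smul]; exact ht x
            refine endgame V w hVw hw3 a1 c0 c1 1 2 a1nz c0nz c1nz ?_ gC
              (Or.inr zc0_2) (Or.inl zc1_1)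
            intro i hj hk
            fin_cases i
            · show dot4 a1 (hom3 (P 0)) = 0
              apply cancel_left hα
              rw [ht' (hom3 (P 0)), zb0_0, mul_zero]
            · exact absurd rfl hj
            · exact absurd rfl hk
            · show dot4 a1 (hom3 (P 3)) = 0
              apply cancel_left hα
              rw [ht' (hom3 (P 3)), zb0_3, mul_zero]
            · exact za1_4
            · exact za1_5
            · exact za1_6
            · exact za1_7
    · by_cases hα : α = 0
      · by_cases hβ : β = 0
        · -- only γ nonzero: impossible
          subst hα; subst hβ
          exfalso
          obtain ⟨x, hx⟩ := nzmul c0 c1 c0nz c1nz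
          have h0 := hev x
          apply hx
          have h1 : γ * (dot4 c0 x * dot4 c1 x) = 0 := by linarith [h0]
          exact cancel_left hγ h1
        · -- two-term case (B,C)
          subst hα
          have b1nzs : ∃ x, dot4 (fun j => β * b1 j) x ≠ 0 := by
            obtain ⟨x, hx⟩ := b1nz
            exact ⟨x, by rw [dot4_smul]; exact mul_ne_zero hβ hx⟩
          have hid : ∀ x, dot4 b0 x * dot4 (fun j => β * b1 j) x
              = dot4 c0 x * dot4 (fun j => -γ * c1 j) x := by
            intro x
            rw [dot4_smul, dot4_smul]
            linear_combination hev x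
          rcases UFD b0 _ c0 _ hid (nzmul b0 _ b0nz b1nzs) with ⟨t, ht0, ht⟩ | ⟨t, ht0, ht⟩
          · -- b0 = t c0 : vanishes off {1,6}
            refine endgame V w hVw hw3 b0 a0 a1 1 6 b0nz a0nz a1nz ?_ gA
              (Or.inl za0_1) (Or.inr za1_6)
            intro i hj hk
            fin_cases i
            · exact zb0_0
            · exact absurd rfl hj
            · exact (ht (hom3 (P 2))).trans (by rw [zc0_2, mul_zero])
            · exact zb0_3
            · exact zb0_4
            · exact (ht (hom3 (P 5))).trans (by rw [zc0_5, mul_zero])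
            · exact absurd rfl hk
            · exact zb0_7
          · -- b1 = (t/β) c0 : vanishes off {3,4}
            have ht' : ∀ x, β * dot4 b1 x = t * dot4 c0 x := by
              intro x; rw [← dot4_smul]; exact ht x
            refine endgame V w hVw hw3 b1 a0 a1 3 4 b1nz a0nz a1nz ?_ gA
              (Or.inl za0_3) (Or.inr za1_4)
            intro i hj hk
            fin_cases i
            · show dot4 b1 (hom3 (P 0)) = 0
              apply cancel_left hβ
              rw [ht' (hom3 (P 0)), zc0_0, mul_zero]
            · exact zb1_1
            · exact zb1_2
            · exact absurd rfl hj
            · exact absurd rfl hk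
            · exact zb1_5
            · exact zb1_6
            · show dot4 b1 (hom3 (P 7)) = 0
              apply cancel_left hβ
              rw [ht' (hom3 (P 7)), zc0_7, mul_zero]
      · by_cases hβ : β = 0
        · -- two-term case (A,C)
          subst hβ
          have a1nzs : ∃ x, dot4 (fun j => α * a1 j) x ≠ 0 := by
            obtain ⟨x, hx⟩ := a1nz
            exact ⟨x, by rw [dot4_smul]; exact mul_ne_zero hα hx⟩
          have hid : ∀ x, dot4 a0 x * dot4 (fun j => α * a1 j) x
              = dot4 c0 x * dot4 (fun j => -γ * c1 j) x := by
            intro x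
            rw [dot4_smul, dot4_smul]
            linear_combination hev x
          rcases UFD a0 _ c0 _ hid (nzmul a0 _ a0nz a1nzs) with ⟨t, ht0, ht⟩ | ⟨t, ht0, ht⟩
          · -- a0 = t c0 : vanishes off {4,6}
            refine endgame V w hVw hw3 a0 b0 b1 4 6 a0nz b0nz b1nz ?_ gB
              (Or.inl zb0_4) (Or.inr zb1_6)
            intro i hj hk
            fin_cases i
            · exact za0_0
            · exact za0_1
            · exact za0_2
            · exact za0_3
            · exact absurd rfl hj
            · exact (ht (hom3 (P 5))).trans (by rw [zc0_5, mul_zero])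
            · exact absurd rfl hk
            · exact (ht (hom3 (P 7))).trans (by rw [zc0_7, mul_zero])
          · -- a1 = (t/α) c0 : vanishes off {1,3}
            have ht' : ∀ x, α * dot4 a1 x = t * dot4 c0 x := by
              intro x; rw [← dot4_smul]; exact ht x
            refine endgame V w hVw hw3 a1 b0 b1 1 3 a1nz b0nz b1nz ?_ gB
              (Or.inr zb0_3) (Or.inl zb1_1)
            intro i hj hk
            fin_cases i
            · show dot4 a1 (hom3 (P 0)) = 0
              apply cancel_left hα
              rw [ht' (hom3 (P 0)), zc0_0, mul_zero]
            · exact absurd rfl hj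
            · show dot4 a1 (hom3 (P 2)) = 0
              apply cancel_left hα
              rw [ht' (hom3 (P 2)), zc0_2, mul_zero]
            · exact absurd rfl hk
            · exact za1_4
            · exact za1_5
            · exact za1_6
            · exact za1_7
        · -- three-term case : α β γ all nonzero
          by_cases hva0 : ∀ x, dot4 c0 x = 0 → dot4 a0 x = 0
          · obtain ⟨s, hs⟩ := V2'' c0 a0 hva0
            refine endgame V w hVw hw3 a0 b0 b1 4 6 a0nz b0nz b1nz ?_ gB
              (Or.inl zb0_4) (Or.inr zb1_6)
            intro i hj hk
            fin_cases i
            · exact za0_0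
            · exact za0_1
            · exact za0_2
            · exact za0_3
            · exact absurd rfl hj
            · exact (hs (hom3 (P 5))).trans (by rw [zc0_5, mul_zero])
            · exact absurd rfl hk
            · exact (hs (hom3 (P 7))).trans (by rw [zc0_7, mul_zero])
          by_cases hva1 : ∀ x, dot4 c0 x = 0 → dot4 a1 x = 0
          · obtain ⟨s, hs⟩ := V2'' c0 a1 hva1
            refine endgame V w hVw hw3 a1 b0 b1 1 3 a1nz b0nz b1nz ?_ gB
              (Or.inr zb0_3) (Or.inl zb1_1)
            intro i hj hk
            fin_cases i
            · exact (hs (hom3 (P 0))).trans (by rw [zc0_0, mul_zero])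
            · exact absurd rfl hj
            · exact (hs (hom3 (P 2))).trans (by rw [zc0_2, mul_zero])
            · exact absurd rfl hk
            · exact za1_4
            · exact za1_5
            · exact za1_6
            · exact za1_7
          by_cases hvb0 : ∀ x, dot4 c0 x = 0 → dot4 b0 x = 0
          · obtain ⟨s, hs⟩ := V2'' c0 b0 hvb0
            refine endgame V w hVw hw3 b0 a0 a1 1 6 b0nz a0nz a1nz ?_ gA
              (Or.inl za0_1) (Or.inr za1_6)
            intro i hj hk
            fin_cases i
            · exact zb0_0
            · exact absurd rfl hj
            · exact (hs (hom3 (P 2))).trans (by rw [zc0_2, mul_zero])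
            · exact zb0_3
            · exact zb0_4
            · exact (hs (hom3 (P 5))).trans (by rw [zc0_5, mul_zero])
            · exact absurd rfl hk
            · exact zb0_7
          by_cases hvb1 : ∀ x, dot4 c0 x = 0 → dot4 b1 x = 0
          · obtain ⟨s, hs⟩ := V2'' c0 b1 hvb1
            refine endgame V w hVw hw3 b1 a0 a1 3 4 b1nz a0nz a1nz ?_ gA
              (Or.inl za0_3) (Or.inr za1_4)
            intro i hj hk
            fin_cases i
            · exact (hs (hom3 (P 0))).trans (by rw [zc0_0, mul_zero])
            · exact zb1_1
            · exact zb1_2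
            · exact absurd rfl hj
            · exact absurd rfl hk
            · exact zb1_5
            · exact zb1_6
            · exact (hs (hom3 (P 7))).trans (by rw [zc0_7, mul_zero])
          push_neg at hva0 hva1 hvb0 hvb1
          have hadd2 : ∀ x ∈ {x : Fin 4 → ℝ | dot4 c0 x = 0 ∧ dot4 b0 x = 0},
              ∀ y ∈ {x : Fin 4 → ℝ | dot4 c0 x = 0 ∧ dot4 b0 x = 0},
              x + y ∈ {x : Fin 4 → ℝ | dot4 c0 x = 0 ∧ dot4 b0 x = 0} := by
            intro x hx y hy
            simp only [Set.mem_setOf_eq] at hx hy ⊢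
            exact ⟨by rw [dot4_add, hx.1, hy.1, add_zero],
                   by rw [dot4_add, hx.2, hy.2, add_zero]⟩
          have haddU : ∀ x ∈ {x : Fin 4 → ℝ | dot4 c0 x = 0},
              ∀ y ∈ {x : Fin 4 → ℝ | dot4 c0 x = 0},
              x + y ∈ {x : Fin 4 → ℝ | dot4 c0 x = 0} := by
            intro x hx y hy
            simp only [Set.mem_setOf_eq] at hx hy ⊢
            rw [dot4_add, hx, hy, add_zero]
          have hS2 : ∀ x ∈ {x : Fin 4 → ℝ | dot4 c0 x = 0 ∧ dot4 b0 x = 0},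
              dot4 a0 x = 0 ∨ dot4 a1 x = 0 := by
            intro x hx
            obtain ⟨hcx, hbx⟩ := hx
            have h0 := hev x
            rw [hcx, hbx] at h0
            apply mul_eq_zero.1
            apply cancel_left hα
            linarith [h0]
          rcases V1 _ hadd2 a0 a1 hS2 with hCA0 | hCA1
          · -- a0 vanishes on ker c0 ∩ ker b0
            obtain ⟨t, s, hts⟩ := V2' b0 c0 a0 (fun x hc hb => hCA0 x ⟨hc, hb⟩)
            have ht0 : t ≠ 0 := by
              intro h0
              obtain ⟨x, hcx, hax⟩ := hva0
              apply hax
              rw [hts x, h0, hcx]; ring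
            have hmatch : ∀ x ∈ {x : Fin 4 → ℝ | dot4 c0 x = 0},
                dot4 b0 x = 0 ∨ dot4 (fun j => α * t * a1 j + β * b1 j) x = 0 := by
              intro x hcx
              simp only [Set.mem_setOf_eq] at hcx
              have h0 := hev x
              have ha0x : dot4 a0 x = t * dot4 b0 x := by rw [hts x, hcx]; ring
              apply mul_eq_zero.1
              rw [dot4_combo2]
              linear_combination h0 - (α * dot4 a1 x) * ha0x - (γ * dot4 c1 x) * hcx
            rcases V1 _ haddU b0 _ hmatch with hb0U | hGU
            · exfalso
              obtain ⟨x, hcx, hbx⟩ := hvb0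
              exact hbx (hb0U x hcx)
            obtain ⟨s', hs'⟩ := V2'' c0 _ (fun x hx => hGU x hx)
            have hat : α * t ≠ 0 := mul_ne_zero hα ht0
            by_cases hs0 : s = 0
            · refine endgame V w hVw hw3 a0 c0 c1 5 6 a0nz c0nz c1nz ?_ gC
                (Or.inl zc0_5) (Or.inr zc1_6)
              intro i hj hk
              fin_cases i
              · exact za0_0
              · exact za0_1
              · exact za0_2
              · exact za0_3
              · exact (hts (hom3 (P 4))).trans (by rw [zb0_4, hs0]; ring)
              · exact absurd rfl hj
              · exact absurd rfl hk
              · exact (hts (hom3 (P 7))).trans (by rw [zb0_7, hs0]; ring)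
            by_cases hs'0 : s' = 0
            · refine endgame V w hVw hw3 a1 c0 c1 0 3 a1nz c0nz c1nz ?_ gC
                (Or.inl zc0_0) (Or.inr zc1_3)
              intro i hj hk
              fin_cases i
              · exact absurd rfl hj
              · show dot4 a1 (hom3 (P 1)) = 0
                apply cancel_left hat
                have h1 := hs' (hom3 (P 1))
                rw [dot4_combo2, zb1_1, hs'0] at h1
                linarith [h1]
              · show dot4 a1 (hom3 (P 2)) = 0
                apply cancel_left hat
                have h1 := hs' (hom3 (P 2))
                rw [dot4_combo2, zb1_2, hs'0] at h1
                linarith [h1]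
              · exact absurd rfl hk
              · exact za1_4
              · exact za1_5
              · exact za1_6
              · exact za1_7
            · have zc0_3 : dot4 c0 (hom3 (P 3)) = 0 := by
                apply cancel_left hs0
                have h1 := hts (hom3 (P 3))
                rw [za0_3, zb0_3] at h1
                linarith [h1]
              have zc0_6 : dot4 c0 (hom3 (P 6)) = 0 := by
                apply cancel_left hs'0
                have h1 := hs' (hom3 (P 6))
                rw [dot4_combo2, za1_6, zb1_6] at h1
                linarith [h1]
              refine endgame V w hVw hw3 c0 a0 a1 1 4 c0nz a0nz a1nz ?_ gA
                (Or.inl za0_1) (Or.inr za1_4)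
              intro i hj hk
              fin_cases i
              · exact zc0_0
              · exact absurd rfl hj
              · exact zc0_2
              · exact zc0_3
              · exact absurd rfl hk
              · exact zc0_5
              · exact zc0_6
              · exact zc0_7
          · -- a1 vanishes on ker c0 ∩ ker b0
            obtain ⟨t, s, hts⟩ := V2' b0 c0 a1 (fun x hc hb => hCA1 x ⟨hc, hb⟩)
            have ht0 : t ≠ 0 := by
              intro h0
              obtain ⟨x, hcx, hax⟩ := hva1
              apply hax
              rw [hts x, h0, hcx]; ring
            have hmatch : ∀ x ∈ {x : Fin 4 → ℝ | dot4 c0 x = 0},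
                dot4 b0 x = 0 ∨ dot4 (fun j => α * t * a0 j + β * b1 j) x = 0 := by
              intro x hcx
              simp only [Set.mem_setOf_eq] at hcx
              have h0 := hev x
              have ha1x : dot4 a1 x = t * dot4 b0 x := by rw [hts x, hcx]; ring
              apply mul_eq_zero.1
              rw [dot4_combo2]
              linear_combination h0 - (α * dot4 a0 x) * ha1x - (γ * dot4 c1 x) * hcx
            rcases V1 _ haddU b0 _ hmatch with hb0U | hGU
            · exfalso
              obtain ⟨x, hcx, hbx⟩ := hvb0
              exact hbx (hb0U x hcx)
            obtain ⟨s', hs'⟩ := V2'' c0 _ (fun x hx => hGU x hx)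
            have hat : α * t ≠ 0 := mul_ne_zero hα ht0
            by_cases hs0 : s = 0
            · refine endgame V w hVw hw3 a1 c0 c1 1 2 a1nz c0nz c1nz ?_ gC
                (Or.inr zc0_2) (Or.inl zc1_1)
              intro i hj hk
              fin_cases i
              · exact (hts (hom3 (P 0))).trans (by rw [zb0_0, hs0]; ring)
              · exact absurd rfl hj
              · exact absurd rfl hk
              · exact (hts (hom3 (P 3))).trans (by rw [zb0_3, hs0]; ring)
              · exact za1_4
              · exact za1_5
              · exact za1_6
              · exact za1_7
            by_cases hs'0 : s' = 0
            · refine endgame V w hVw hw3 a0 c0 c1 4 7 a0nz c0nz c1nz ?_ gC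
                (Or.inr zc0_7) (Or.inl zc1_4)
              intro i hj hk
              fin_cases i
              · exact za0_0
              · exact za0_1
              · exact za0_2
              · exact za0_3
              · exact absurd rfl hj
              · show dot4 a0 (hom3 (P 5)) = 0
                apply cancel_left hat
                have h1 := hs' (hom3 (P 5))
                rw [dot4_combo2, zb1_5, hs'0] at h1
                linarith [h1]
              · show dot4 a0 (hom3 (P 6)) = 0
                apply cancel_left hat
                have h1 := hs' (hom3 (P 6))
                rw [dot4_combo2, zb1_6, hs'0] at h1
                linarith [h1]
              · exact absurd rfl hk
            · have zc0_4 : dot4 c0 (hom3 (P 4)) = 0 := by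
                apply cancel_left hs0
                have h1 := hts (hom3 (P 4))
                rw [za1_4, zb0_4] at h1
                linarith [h1]
              have zc0_1 : dot4 c0 (hom3 (P 1)) = 0 := by
                apply cancel_left hs'0
                have h1 := hs' (hom3 (P 1))
                rw [dot4_combo2, za0_1, zb1_1] at h1
                linarith [h1]
              refine endgame V w hVw hw3 c0 a0 a1 3 6 c0nz a0nz a1nz ?_ gA
                (Or.inl za0_3) (Or.inr za1_6)
              intro i hj hk
              fin_cases i
              · exact zc0_0
              · exact zc0_1
              · exact zc0_2
              · exact absurd rfl hj
              · exact zc0_4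
              · exact zc0_5
              · exact absurd rfl hk
              · exact zc0_7
end

section
/- Let P₁,…,P₈ ∈ ℝ³ be the vertices of a combinatorial cube (eight points with the vertex-facet incidences of a cube, each face coplanar). Then for any two additional points f₁, f₂ ∈ ℝ³, there exists a nonzero symmetric matrix Q ∈ ℝ^{4×4} such that the quadric {p ∈ ℝ³ : (p,1)ᵀ Q (p,1) = 0} passes through all ten points P₁,…,P₈, f₁, f₂. -/
open Matrix

namespace QuadCube

abbrev V4 := Fin 4 → ℝ
abbrev V10 := Fin 10 → ℝ

def sig (v : V4) : V10 :=
  ![v 0 * v 0, v 1 * v 1, v 2 * v 2, v 3 * v 3,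
    v 0 * v 1, v 0 * v 2, v 0 * v 3, v 1 * v 2, v 1 * v 3, v 2 * v 3]

def tcoef (x : V4) : Fin 10 → V4 :=
  ![![x 0, 0, 0, 0], ![0, x 1, 0, 0], ![0, 0, x 2, 0], ![0, 0, 0, x 3],
    ![x 1, x 0, 0, 0], ![x 2, 0, x 0, 0], ![x 3, 0, 0, x 0],
    ![0, x 2, x 1, 0], ![0, x 3, 0, x 1], ![0, 0, x 3, x 2]]

def tau (x y : V4) : V10 := fun j => tcoef x j ⬝ᵥ y

lemma sig_dot_tau (v x y : V4) : sig v ⬝ᵥ tau x y = (x ⬝ᵥ v) * (y ⬝ᵥ v) := by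
  simp [sig, tau, tcoef, dotProduct, Fin.sum_univ_succ,
    show Fin.succ (2 : Fin 3) = (3 : Fin 4) from rfl]
  ring

lemma exists_dot_ne {x : V4} (hx : x ≠ 0) : ∃ v : V4, x ⬝ᵥ v ≠ 0 := by
  have : ∃ k, x k ≠ 0 := by
    by_contra h
    push_neg at h
    exact hx (funext h)
  obtain ⟨k, hk⟩ := this
  refine ⟨Pi.single k 1, ?_⟩
  rw [dotProduct_single]
  simpa using hk

lemma exists_both_ne {x y : V4} (hx : x ≠ 0) (hy : y ≠ 0) :
    ∃ v : V4, x ⬝ᵥ v ≠ 0 ∧ y ⬝ᵥ v ≠ 0 := by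
  obtain ⟨v1, h1⟩ := exists_dot_ne hx
  obtain ⟨v2, h2⟩ := exists_dot_ne hy
  by_cases hy1 : y ⬝ᵥ v1 ≠ 0
  · exact ⟨v1, h1, hy1⟩
  by_cases hx2 : x ⬝ᵥ v2 ≠ 0
  · exact ⟨v2, hx2, h2⟩
  push_neg at hy1 hx2
  refine ⟨v1 + v2, ?_, ?_⟩
  · rw [dotProduct_add, hx2, add_zero]; exact h1
  · rw [dotProduct_add, hy1, zero_add]; exact h2

lemma eq_zero_of_prod {x y : V4} (h : ∀ v : V4, (x ⬝ᵥ v) * (y ⬝ᵥ v) = 0) :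
    x = 0 ∨ y = 0 := by
  by_contra hc
  push_neg at hc
  obtain ⟨v, h1, h2⟩ := exists_both_ne hc.1 hc.2
  exact h1 (by simpa [mul_eq_zero, h2] using h v)

lemma exists_smul_of_ker_le {x z : V4} (hx : x ≠ 0)
    (h : ∀ v : V4, x ⬝ᵥ v = 0 → z ⬝ᵥ v = 0) : ∃ t : ℝ, z = t • x := by
  obtain ⟨w, hw⟩ := exists_dot_ne hx
  refine ⟨(z ⬝ᵥ w) / (x ⬝ᵥ w), ?_⟩
  have key : ∀ v : V4, z ⬝ᵥ v = (z ⬝ᵥ w) / (x ⬝ᵥ w) * (x ⬝ᵥ v) := by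
    intro v
    have hv : x ⬝ᵥ (v - ((x ⬝ᵥ v) / (x ⬝ᵥ w)) • w) = 0 := by
      rw [dotProduct_sub, dotProduct_smul]
      rw [smul_eq_mul, div_mul_cancel₀ _ hw, sub_self]
    have hz := h _ hv
    rw [dotProduct_sub, dotProduct_smul] at hz
    have h2 : z ⬝ᵥ v = (x ⬝ᵥ v) / (x ⬝ᵥ w) * (z ⬝ᵥ w) := by
      have : z ⬝ᵥ v - (x ⬝ᵥ v) / (x ⬝ᵥ w) * (z ⬝ᵥ w) = 0 := by
        simpa [smul_eq_mul] using hz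
      linarith
    rw [h2]; field_simp
  funext k
  have hk := key (Pi.single k 1)
  rw [dotProduct_single, dotProduct_single] at hk
  simpa using hk

lemma split {a b c c' : V4}
    (h : ∀ v : V4, a ⬝ᵥ v = 0 → b ⬝ᵥ v = 0 → (c ⬝ᵥ v) * (c' ⬝ᵥ v) = 0) :
    (∀ v : V4, a ⬝ᵥ v = 0 → b ⬝ᵥ v = 0 → c ⬝ᵥ v = 0) ∨
    (∀ v : V4, a ⬝ᵥ v = 0 → b ⬝ᵥ v = 0 → c' ⬝ᵥ v = 0) := by
  by_cases hc : ∀ v : V4, a ⬝ᵥ v = 0 → b ⬝ᵥ v = 0 → c ⬝ᵥ v = 0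
  · exact Or.inl hc
  push_neg at hc
  obtain ⟨v1, ha1, hb1, hc1⟩ := hc
  have hc'1 : c' ⬝ᵥ v1 = 0 := ((mul_eq_zero.mp (h v1 ha1 hb1)).resolve_left hc1)
  refine Or.inr fun w haw hbw => ?_
  by_cases hcw : c ⬝ᵥ w = 0
  · have hsum := h (v1 + w) (by rw [dotProduct_add, ha1, haw, add_zero])
      (by rw [dotProduct_add, hb1, hbw, add_zero])
    have hcs : c ⬝ᵥ (v1 + w) ≠ 0 := by
      rw [dotProduct_add, hcw, add_zero]; exact hc1
    have h3 := (mul_eq_zero.mp hsum).resolve_left hcs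
    rw [dotProduct_add, hc'1, zero_add] at h3
    exact h3
  · exact (mul_eq_zero.mp (h w haw hbw)).resolve_left hcw

def tauL (x : V4) : V4 →ₗ[ℝ] V10 where
  toFun := tau x
  map_add' y z := by funext j; simp [tau, dotProduct_add]
  map_smul' c y := by funext j; simp [tau, dotProduct_smul]

lemma tau_eq_zero {x y : V4} (hx : x ≠ 0) (h : tau x y = 0) : y = 0 := by
  have hv : ∀ v : V4, (x ⬝ᵥ v) * (y ⬝ᵥ v) = 0 := by
    intro v
    rw [← sig_dot_tau v x y, h, dotProduct_zero]
  exact (eq_zero_of_prod hv).resolve_left hx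

lemma tauL_ker {x : V4} (hx : x ≠ 0) : LinearMap.ker (tauL x) = ⊥ := by
  rw [LinearMap.ker_eq_bot']
  intro y hy
  exact tau_eq_zero hx hy

def dot2 (w1 w2 : V4) : V4 →ₗ[ℝ] (Fin 2 → ℝ) where
  toFun p := fun j => ![w1, w2] j ⬝ᵥ p
  map_add' y z := by funext j; simp [dotProduct_add]
  map_smul' c y := by funext j; simp [dotProduct_smul]

lemma exists_perp2 (w1 w2 : V4) :
    ∃ p : Fin 2 → V4, LinearIndependent ℝ p ∧ ∀ k, w1 ⬝ᵥ p k = 0 ∧ w2 ⬝ᵥ p k = 0 := by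
  have hrank : 2 ≤ Module.finrank ℝ (LinearMap.ker (dot2 w1 w2)) := by
    have h1 := (dot2 w1 w2).finrank_range_add_finrank_ker
    have h2 : Module.finrank ℝ (LinearMap.range (dot2 w1 w2)) ≤ 2 := by
      have := Submodule.finrank_le (LinearMap.range (dot2 w1 w2))
      simpa [Module.finrank_fin_fun] using this
    have h3 : Module.finrank ℝ V4 = 4 := Module.finrank_fin_fun ℝ
    omega
  obtain ⟨f, hf⟩ := exists_linearIndependent_of_le_finrank hrank
  refine ⟨fun k => (f k : V4), hf.map' (LinearMap.ker (dot2 w1 w2)).subtype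
    (Submodule.ker_subtype _), fun k => ?_⟩
  have hm := (f k).2
  rw [LinearMap.mem_ker] at hm
  constructor
  · have := congrFun hm 0
    simp only [dot2, LinearMap.coe_mk, AddHom.coe_mk, Matrix.cons_val_zero,
      Pi.zero_apply] at this
    exact this
  · have := congrFun hm 1
    simp only [dot2, LinearMap.coe_mk, AddHom.coe_mk, Matrix.cons_val_one,
      Matrix.head_cons, Pi.zero_apply] at this
    exact this

def dot1 (w : V4) : V4 →ₗ[ℝ] (Fin 1 → ℝ) where
  toFun p := fun _ => w ⬝ᵥ p
  map_add' y z := by funext j; simp [dotProduct_add]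
  map_smul' c y := by funext j; simp [dotProduct_smul]

lemma exists_perp1 (w : V4) :
    ∃ p : Fin 3 → V4, LinearIndependent ℝ p ∧ ∀ k, w ⬝ᵥ p k = 0 := by
  have hrank : 3 ≤ Module.finrank ℝ (LinearMap.ker (dot1 w)) := by
    have h1 := (dot1 w).finrank_range_add_finrank_ker
    have h2 : Module.finrank ℝ (LinearMap.range (dot1 w)) ≤ 1 := by
      have := Submodule.finrank_le (LinearMap.range (dot1 w))
      simpa [Module.finrank_fin_fun] using this
    have h3 : Module.finrank ℝ V4 = 4 := Module.finrank_fin_fun ℝ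
    omega
  obtain ⟨f, hf⟩ := exists_linearIndependent_of_le_finrank hrank
  refine ⟨fun k => (f k : V4), hf.map' (LinearMap.ker (dot1 w)).subtype
    (Submodule.ker_subtype _), fun k => ?_⟩
  have hm := (f k).2
  rw [LinearMap.mem_ker] at hm
  have := congrFun hm 0
  simp only [dot1, LinearMap.coe_mk, AddHom.coe_mk, Pi.zero_apply] at this
  exact this

lemma W1 (u : Fin 8 → V4) {x : V4} (hx : x ≠ 0) (j : Fin 8)
    (h : ∀ i, i ≠ j → x ⬝ᵥ u i = 0) :
    ∃ q : Fin 3 → V10, LinearIndependent ℝ q ∧ ∀ k i, sig (u i) ⬝ᵥ q k = 0 := by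
  obtain ⟨p, hp, hpv⟩ := exists_perp1 (u j)
  refine ⟨fun k => tauL x (p k), hp.map' (tauL x) (tauL_ker hx), ?_⟩
  intro k i
  show sig (u i) ⬝ᵥ tau x (p k) = 0
  rw [sig_dot_tau]
  by_cases hij : i = j
  · subst hij
    exact mul_eq_zero.mpr (Or.inr (by rw [dotProduct_comm]; exact hpv k))
  · exact mul_eq_zero.mpr (Or.inl (h i hij))

lemma W2 (u : Fin 8 → V4) {x y : V4} (hx : x ≠ 0) (hxy : ¬ ∃ t : ℝ, y = t • x)
    (j1 j2 k1 k2 : Fin 8)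
    (hj : ∀ i, i ≠ j1 → i ≠ j2 → x ⬝ᵥ u i = 0)
    (hk : ∀ i, i ≠ k1 → i ≠ k2 → y ⬝ᵥ u i = 0) :
    ∃ q : Fin 3 → V10, LinearIndependent ℝ q ∧ ∀ k i, sig (u i) ⬝ᵥ q k = 0 := by
  have hy : y ≠ 0 := by rintro rfl; exact hxy ⟨0, by simp⟩
  obtain ⟨p, hp, hpv⟩ := exists_perp2 (u j1) (u j2)
  obtain ⟨r, hr, hrv⟩ := exists_perp2 (u k1) (u k2)
  have hrr : ∃ rr : V4, (¬ ∃ t : ℝ, rr = t • x) ∧ u k1 ⬝ᵥ rr = 0 ∧ u k2 ⬝ᵥ rr = 0 := by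
    by_cases h0 : ∃ t : ℝ, r 0 = t • x
    · refine ⟨r 1, ?_, (hrv 1).1, (hrv 1).2⟩
      rintro ⟨t1, ht1⟩
      obtain ⟨t0, ht0⟩ := h0
      have h00 : r 0 ≠ 0 := hr.ne_zero 0
      have ht0' : t0 ≠ 0 := by
        rintro rfl
        rw [zero_smul] at ht0
        exact h00 ht0
      have hg := Fintype.linearIndependent_iff.mp hr ![t1, -t0] ?_
      · have := hg 1
        simp only [Matrix.cons_val_one, Matrix.head_cons, Matrix.cons_val_zero, neg_eq_zero] at this
        exact ht0' this
      · rw [Fin.sum_univ_two]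
        simp only [Matrix.cons_val_zero, Matrix.cons_val_one, Matrix.head_cons, ht0, ht1]
        module
    · exact ⟨r 0, h0, (hrv 0).1, (hrv 0).2⟩
  obtain ⟨rr, hrr1, hrrk1, hrrk2⟩ := hrr
  refine ⟨![tau x (p 0), tau x (p 1), tau y rr], ?_, ?_⟩
  · rw [Fintype.linearIndependent_iff]
    intro g hg
    rw [Fin.sum_univ_three] at hg
    simp only [Matrix.cons_val_zero, Matrix.cons_val_one, Matrix.head_cons,
      Matrix.cons_val_two, Matrix.tail_cons] at hg
    have hpt : ∀ v : V4, g 0 * ((x ⬝ᵥ v) * (p 0 ⬝ᵥ v)) + g 1 * ((x ⬝ᵥ v) * (p 1 ⬝ᵥ v))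
        + g 2 * ((y ⬝ᵥ v) * (rr ⬝ᵥ v)) = 0 := by
      intro v
      have h4 := congrArg (fun w => sig v ⬝ᵥ w) hg
      simpa [dotProduct_add, dotProduct_smul, sig_dot_tau, smul_eq_mul] using h4
    have hg2 : g 2 = 0 := by
      by_contra hg2
      have hker : ∀ v : V4, x ⬝ᵥ v = 0 → x ⬝ᵥ v = 0 → (y ⬝ᵥ v) * (rr ⬝ᵥ v) = 0 := by
        intro v hv _
        have h5 := hpt v
        rw [hv] at h5
        have h6 : g 2 * ((y ⬝ᵥ v) * (rr ⬝ᵥ v)) = 0 := by linarith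
        exact (mul_eq_zero.mp h6).resolve_left hg2
      rcases split hker with h7 | h7
      · exact hxy (exists_smul_of_ker_le hx (fun v hv => h7 v hv hv))
      · exact hrr1 (exists_smul_of_ker_le hx (fun v hv => h7 v hv hv))
    rw [hg2, zero_smul, add_zero] at hg
    have hcombo : tauL x (g 0 • p 0 + g 1 • p 1) = 0 := by
      rw [map_add, LinearMap.map_smul, LinearMap.map_smul]
      exact hg
    have hzero : g 0 • p 0 + g 1 • p 1 = 0 := tau_eq_zero hx hcombo
    have hg01 := Fintype.linearIndependent_iff.mp hp ![g 0, g 1] ?_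
    · intro i
      fin_cases i
      · exact hg01 0
      · exact hg01 1
      · exact hg2
    · rw [Fin.sum_univ_two]
      simpa using hzero
  · intro k i
    fin_cases k
    · show sig (u i) ⬝ᵥ tau x (p 0) = 0
      rw [sig_dot_tau]
      by_cases hij : i = j1
      · subst hij
        exact mul_eq_zero.mpr (Or.inr (by rw [dotProduct_comm]; exact (hpv 0).1))
      by_cases hij2 : i = j2
      · subst hij2
        exact mul_eq_zero.mpr (Or.inr (by rw [dotProduct_comm]; exact (hpv 0).2))
      · exact mul_eq_zero.mpr (Or.inl (hj i hij hij2))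
    · show sig (u i) ⬝ᵥ tau x (p 1) = 0
      rw [sig_dot_tau]
      by_cases hij : i = j1
      · subst hij
        exact mul_eq_zero.mpr (Or.inr (by rw [dotProduct_comm]; exact (hpv 1).1))
      by_cases hij2 : i = j2
      · subst hij2
        exact mul_eq_zero.mpr (Or.inr (by rw [dotProduct_comm]; exact (hpv 1).2))
      · exact mul_eq_zero.mpr (Or.inl (hj i hij hij2))
    · show sig (u i) ⬝ᵥ tau y rr = 0
      rw [sig_dot_tau]
      by_cases hik : i = k1
      · subst hik
        exact mul_eq_zero.mpr (Or.inr (by rw [dotProduct_comm]; exact hrrk1))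
      by_cases hik2 : i = k2
      · subst hik2
        exact mul_eq_zero.mpr (Or.inr (by rw [dotProduct_comm]; exact hrrk2))
      · exact mul_eq_zero.mpr (Or.inl (hk i hik hik2))


lemma core (u : Fin 8 → V4) (a a' b b' c c' : V4) (hc : c ≠ 0) (hc' : c' ≠ 0)
    (ha0 : a ⬝ᵥ u 0 = 0) (ha1 : a ⬝ᵥ u 1 = 0) (ha2 : a ⬝ᵥ u 2 = 0) (ha3 : a ⬝ᵥ u 3 = 0)
    (ha4 : a' ⬝ᵥ u 4 = 0) (ha5 : a' ⬝ᵥ u 5 = 0) (ha6 : a' ⬝ᵥ u 6 = 0) (ha7 : a' ⬝ᵥ u 7 = 0)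
    (hb0 : b ⬝ᵥ u 0 = 0) (hb3 : b ⬝ᵥ u 3 = 0) (hb4 : b ⬝ᵥ u 4 = 0) (hb7 : b ⬝ᵥ u 7 = 0)
    (hb1 : b' ⬝ᵥ u 1 = 0) (hb2 : b' ⬝ᵥ u 2 = 0) (hb5 : b' ⬝ᵥ u 5 = 0) (hb6 : b' ⬝ᵥ u 6 = 0)
    (hc0 : c ⬝ᵥ u 0 = 0) (hc2 : c ⬝ᵥ u 2 = 0) (hc5 : c ⬝ᵥ u 5 = 0) (hc7 : c ⬝ᵥ u 7 = 0)
    (hd1 : c' ⬝ᵥ u 1 = 0) (hd3 : c' ⬝ᵥ u 3 = 0) (hd4 : c' ⬝ᵥ u 4 = 0) (hd6 : c' ⬝ᵥ u 6 = 0)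
    (hrel : ∀ v : V4, (a ⬝ᵥ v) * (a' ⬝ᵥ v) = 0 → (b ⬝ᵥ v) * (b' ⬝ᵥ v) = 0 →
      (c ⬝ᵥ v) * (c' ⬝ᵥ v) = 0) :
    ∃ q : Fin 3 → V10, LinearIndependent ℝ q ∧ ∀ k i, sig (u i) ⬝ᵥ q k = 0 := by
  by_cases hdep : ∃ t : ℝ, c' = t • c
  · obtain ⟨t, ht⟩ := hdep
    have htne : t ≠ 0 := by
      rintro rfl
      rw [zero_smul] at ht
      exact hc' ht
    have key : ∀ i, c' ⬝ᵥ u i = 0 → c ⬝ᵥ u i = 0 := by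
      intro i hi
      rw [ht, smul_dotProduct] at hi
      exact (mul_eq_zero.mp hi).resolve_left htne
    have hall : ∀ i : Fin 8, c ⬝ᵥ u i = 0 := by
      intro i
      fin_cases i
      exacts [hc0, key 1 hd1, hc2, key 3 hd3, key 4 hd4, hc5, key 6 hd6, hc7]
    exact W1 u hc 0 (fun i _ => hall i)
  · have l1 := split (a := a) (b := b) (c := c) (c' := c')
      (fun v hva hvb => hrel v (by rw [hva, zero_mul]) (by rw [hvb, zero_mul]))
    have l2 := split (a := a) (b := b') (c := c) (c' := c')
      (fun v hva hvb => hrel v (by rw [hva, zero_mul]) (by rw [hvb, mul_zero]))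
    have l3 := split (a := a') (b := b) (c := c) (c' := c')
      (fun v hva hvb => hrel v (by rw [hva, mul_zero]) (by rw [hvb, zero_mul]))
    have l4 := split (a := a') (b := b') (c := c) (c' := c')
      (fun v hva hvb => hrel v (by rw [hva, mul_zero]) (by rw [hvb, mul_zero]))
    have d1 : (c ⬝ᵥ u 0 = 0 ∧ c ⬝ᵥ u 3 = 0) ∨ (c' ⬝ᵥ u 0 = 0 ∧ c' ⬝ᵥ u 3 = 0) :=
      l1.imp (fun h => ⟨h _ ha0 hb0, h _ ha3 hb3⟩) (fun h => ⟨h _ ha0 hb0, h _ ha3 hb3⟩)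
    have d2 : (c ⬝ᵥ u 1 = 0 ∧ c ⬝ᵥ u 2 = 0) ∨ (c' ⬝ᵥ u 1 = 0 ∧ c' ⬝ᵥ u 2 = 0) :=
      l2.imp (fun h => ⟨h _ ha1 hb1, h _ ha2 hb2⟩) (fun h => ⟨h _ ha1 hb1, h _ ha2 hb2⟩)
    have d3 : (c ⬝ᵥ u 4 = 0 ∧ c ⬝ᵥ u 7 = 0) ∨ (c' ⬝ᵥ u 4 = 0 ∧ c' ⬝ᵥ u 7 = 0) :=
      l3.imp (fun h => ⟨h _ ha4 hb4, h _ ha7 hb7⟩) (fun h => ⟨h _ ha4 hb4, h _ ha7 hb7⟩)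
    have d4 : (c ⬝ᵥ u 5 = 0 ∧ c ⬝ᵥ u 6 = 0) ∨ (c' ⬝ᵥ u 5 = 0 ∧ c' ⬝ᵥ u 6 = 0) :=
      l4.imp (fun h => ⟨h _ ha5 hb5, h _ ha6 hb6⟩) (fun h => ⟨h _ ha5 hb5, h _ ha6 hb6⟩)
    clear l1 l2 l3 l4 hrel
    rcases d1 with ⟨e0, e3⟩ | ⟨g0, g3⟩ <;>
      rcases d2 with ⟨e1, e2⟩ | ⟨g1, g2⟩ <;>
        rcases d3 with ⟨e4, e7⟩ | ⟨g4, g7⟩ <;>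
          rcases d4 with ⟨e5, e6⟩ | ⟨g5, g6⟩
    · exact W1 u hc 0 (by
        intro i hi
        fin_cases i
        exacts [absurd rfl hi, e1, hc2, e3, e4, hc5, e6, hc7])
    · exact W1 u hc 6 (by
        intro i hi
        fin_cases i
        exacts [hc0, e1, hc2, e3, e4, hc5, absurd rfl hi, hc7])
    · exact W1 u hc 4 (by
        intro i hi
        fin_cases i
        exacts [hc0, e1, hc2, e3, absurd rfl hi, hc5, e6, hc7])
    · exact W2 u hc hdep 4 6 0 2
        (by intro i hi1 hi2; fin_cases i; exacts [hc0, e1, hc2, e3, absurd rfl hi1, hc5, absurd rfl hi2, hc7])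
        (by intro i hi1 hi2; fin_cases i; exacts [absurd rfl hi1, hd1, absurd rfl hi2, hd3, hd4, g5, hd6, g7])
    · exact W1 u hc 1 (by
        intro i hi
        fin_cases i
        exacts [hc0, absurd rfl hi, hc2, e3, e4, hc5, e6, hc7])
    · exact W2 u hc hdep 1 6 0 7
        (by intro i hi1 hi2; fin_cases i; exacts [hc0, absurd rfl hi1, hc2, e3, e4, hc5, absurd rfl hi2, hc7])
        (by intro i hi1 hi2; fin_cases i; exacts [absurd rfl hi1, hd1, g2, hd3, hd4, g5, hd6, absurd rfl hi2])
    · exact W2 u hc hdep 1 4 0 5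
        (by intro i hi1 hi2; fin_cases i; exacts [hc0, absurd rfl hi1, hc2, e3, absurd rfl hi2, hc5, e6, hc7])
        (by intro i hi1 hi2; fin_cases i; exacts [absurd rfl hi1, hd1, g2, hd3, hd4, absurd rfl hi2, hd6, g7])
    · exact W1 u hc' 0 (by
        intro i hi
        fin_cases i
        exacts [absurd rfl hi, hd1, g2, hd3, hd4, g5, hd6, g7])
    · exact W1 u hc 3 (by
        intro i hi
        fin_cases i
        exacts [hc0, e1, hc2, absurd rfl hi, e4, hc5, e6, hc7])
    · exact W2 u hc hdep 3 6 2 7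
        (by intro i hi1 hi2; fin_cases i; exacts [hc0, e1, hc2, absurd rfl hi1, e4, hc5, absurd rfl hi2, hc7])
        (by intro i hi1 hi2; fin_cases i; exacts [g0, hd1, absurd rfl hi1, hd3, hd4, g5, hd6, absurd rfl hi2])
    · exact W2 u hc hdep 3 4 2 5
        (by intro i hi1 hi2; fin_cases i; exacts [hc0, e1, hc2, absurd rfl hi1, absurd rfl hi2, hc5, e6, hc7])
        (by intro i hi1 hi2; fin_cases i; exacts [g0, hd1, absurd rfl hi1, hd3, hd4, absurd rfl hi2, hd6, g7])
    · exact W1 u hc' 2 (by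
        intro i hi
        fin_cases i
        exacts [g0, hd1, absurd rfl hi, hd3, hd4, g5, hd6, g7])
    · exact W2 u hc hdep 1 3 5 7
        (by intro i hi1 hi2; fin_cases i; exacts [hc0, absurd rfl hi1, hc2, absurd rfl hi2, e4, hc5, e6, hc7])
        (by intro i hi1 hi2; fin_cases i; exacts [g0, hd1, g2, hd3, hd4, absurd rfl hi1, hd6, absurd rfl hi2])
    · exact W1 u hc' 7 (by
        intro i hi
        fin_cases i
        exacts [g0, hd1, g2, hd3, hd4, g5, hd6, absurd rfl hi])
    · exact W1 u hc' 5 (by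
        intro i hi
        fin_cases i
        exacts [g0, hd1, g2, hd3, hd4, absurd rfl hi, hd6, g7])
    · exact W1 u hc' 0 (by
        intro i hi
        fin_cases i
        exacts [absurd rfl hi, hd1, g2, hd3, hd4, g5, hd6, g7])

lemma rank_arg (u : Fin 8 → V4) (q : Fin 3 → V10) (hq : LinearIndependent ℝ q)
    (hv : ∀ k i, sig (u i) ⬝ᵥ q k = 0) :
    ¬ LinearIndependent ℝ (fun i : Fin 8 => sig (u i)) := by
  intro hI
  set N : Matrix (Fin 8) (Fin 10) ℝ := Matrix.of (fun i => sig (u i)) with hN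
  have hTmul : ∀ g : Fin 8 → ℝ, Nᵀ.mulVecLin g = ∑ i, g i • sig (u i) := by
    intro g
    funext j
    rw [Matrix.mulVecLin_apply, Matrix.mulVec_transpose]
    simp [Matrix.vecMul, dotProduct, Finset.sum_apply, hN]
  have hinj : Function.Injective (Nᵀ.mulVecLin) := by
    rw [← LinearMap.ker_eq_bot, LinearMap.ker_eq_bot']
    intro g hg
    rw [hTmul] at hg
    have hz := Fintype.linearIndependent_iff.mp hI g hg
    funext i
    exact hz i
  have hrk : N.rank = 8 := by
    rw [← Matrix.rank_transpose]
    unfold Matrix.rank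
    rw [LinearMap.finrank_range_of_inj hinj]
    simp [Module.finrank_fin_fun]
  have hker : 3 ≤ Module.finrank ℝ (LinearMap.ker N.mulVecLin) := by
    have hsub : Submodule.span ℝ (Set.range q) ≤ LinearMap.ker N.mulVecLin := by
      rw [Submodule.span_le]
      rintro _ ⟨k, rfl⟩
      rw [SetLike.mem_coe, LinearMap.mem_ker]
      funext i
      exact hv k i
    have hspan : Module.finrank ℝ (Submodule.span ℝ (Set.range q)) = 3 := by
      rw [finrank_span_eq_card hq]
      simp
    exact hspan ▸ Submodule.finrank_mono hsub
  have hrn := N.mulVecLin.finrank_range_add_finrank_ker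
  have hfr : Module.finrank ℝ (LinearMap.range N.mulVecLin) = N.rank := rfl
  have h10 : Module.finrank ℝ V10 = 10 := Module.finrank_fin_fun ℝ
  rw [hfr, hrk, h10] at hrn
  omega

lemma key (u : Fin 8 → V4) (a a' b b' c c' : V4)
    (hane : a ≠ 0) (ha'ne : a' ≠ 0) (hbne : b ≠ 0) (hb'ne : b' ≠ 0)
    (hcne : c ≠ 0) (hc'ne : c' ≠ 0)
    (ha0 : a ⬝ᵥ u 0 = 0) (ha1 : a ⬝ᵥ u 1 = 0) (ha2 : a ⬝ᵥ u 2 = 0) (ha3 : a ⬝ᵥ u 3 = 0)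
    (ha4 : a' ⬝ᵥ u 4 = 0) (ha5 : a' ⬝ᵥ u 5 = 0) (ha6 : a' ⬝ᵥ u 6 = 0) (ha7 : a' ⬝ᵥ u 7 = 0)
    (hb0 : b ⬝ᵥ u 0 = 0) (hb3 : b ⬝ᵥ u 3 = 0) (hb4 : b ⬝ᵥ u 4 = 0) (hb7 : b ⬝ᵥ u 7 = 0)
    (hb1 : b' ⬝ᵥ u 1 = 0) (hb2 : b' ⬝ᵥ u 2 = 0) (hb5 : b' ⬝ᵥ u 5 = 0) (hb6 : b' ⬝ᵥ u 6 = 0)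
    (hc0 : c ⬝ᵥ u 0 = 0) (hc2 : c ⬝ᵥ u 2 = 0) (hc5 : c ⬝ᵥ u 5 = 0) (hc7 : c ⬝ᵥ u 7 = 0)
    (hd1 : c' ⬝ᵥ u 1 = 0) (hd3 : c' ⬝ᵥ u 3 = 0) (hd4 : c' ⬝ᵥ u 4 = 0) (hd6 : c' ⬝ᵥ u 6 = 0) :
    ∃ g : Fin 8 → ℝ, ∑ i, g i • sig (u i) = 0 ∧ ∃ i, g i ≠ 0 := by
  have claimC : ∃ q : Fin 3 → V10, LinearIndependent ℝ q ∧ ∀ k i, sig (u i) ⬝ᵥ q k = 0 := by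
    by_cases hLI : LinearIndependent ℝ ![tau a a', tau b b', tau c c']
    · refine ⟨![tau a a', tau b b', tau c c'], hLI, ?_⟩
      intro k i
      fin_cases k
      · show sig (u i) ⬝ᵥ tau a a' = 0
        rw [sig_dot_tau]
        fin_cases i
        exacts [mul_eq_zero.mpr (Or.inl ha0), mul_eq_zero.mpr (Or.inl ha1),
          mul_eq_zero.mpr (Or.inl ha2), mul_eq_zero.mpr (Or.inl ha3),
          mul_eq_zero.mpr (Or.inr ha4), mul_eq_zero.mpr (Or.inr ha5),
          mul_eq_zero.mpr (Or.inr ha6), mul_eq_zero.mpr (Or.inr ha7)]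
      · show sig (u i) ⬝ᵥ tau b b' = 0
        rw [sig_dot_tau]
        fin_cases i
        exacts [mul_eq_zero.mpr (Or.inl hb0), mul_eq_zero.mpr (Or.inr hb1),
          mul_eq_zero.mpr (Or.inr hb2), mul_eq_zero.mpr (Or.inl hb3),
          mul_eq_zero.mpr (Or.inl hb4), mul_eq_zero.mpr (Or.inr hb5),
          mul_eq_zero.mpr (Or.inr hb6), mul_eq_zero.mpr (Or.inl hb7)]
      · show sig (u i) ⬝ᵥ tau c c' = 0
        rw [sig_dot_tau]
        fin_cases i
        exacts [mul_eq_zero.mpr (Or.inl hc0), mul_eq_zero.mpr (Or.inr hd1),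
          mul_eq_zero.mpr (Or.inl hc2), mul_eq_zero.mpr (Or.inr hd3),
          mul_eq_zero.mpr (Or.inr hd4), mul_eq_zero.mpr (Or.inl hc5),
          mul_eq_zero.mpr (Or.inr hd6), mul_eq_zero.mpr (Or.inl hc7)]
    · obtain ⟨g, hg, k, hk⟩ := Fintype.not_linearIndependent_iff.mp hLI
      rw [Fin.sum_univ_three] at hg
      simp only [Matrix.cons_val_zero, Matrix.cons_val_one, Matrix.head_cons,
        Matrix.cons_val_two, Matrix.tail_cons] at hg
      have hpt : ∀ v : V4, g 0 * ((a ⬝ᵥ v) * (a' ⬝ᵥ v)) + g 1 * ((b ⬝ᵥ v) * (b' ⬝ᵥ v))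
          + g 2 * ((c ⬝ᵥ v) * (c' ⬝ᵥ v)) = 0 := by
        intro v
        have h4 := congrArg (fun w => sig v ⬝ᵥ w) hg
        simpa [dotProduct_add, dotProduct_smul, sig_dot_tau, smul_eq_mul] using h4
      fin_cases k
      · have hrel : ∀ v : V4, (c ⬝ᵥ v) * (c' ⬝ᵥ v) = 0 → (b ⬝ᵥ v) * (b' ⬝ᵥ v) = 0 →
            (a ⬝ᵥ v) * (a' ⬝ᵥ v) = 0 := by
          intro v hv1 hv2
          have h5 := hpt v
          rw [hv1, hv2] at h5
          have h6 : g 0 * ((a ⬝ᵥ v) * (a' ⬝ᵥ v)) = 0 := by linarith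
          exact (mul_eq_zero.mp h6).resolve_left hk
        obtain ⟨q, hq, hv⟩ := core ![u 0, u 5, u 2, u 7, u 4, u 1, u 6, u 3] c c' b b' a a'
          hane ha'ne hc0 hc5 hc2 hc7 hd4 hd1 hd6 hd3 hb0 hb7 hb4 hb3 hb5 hb2 hb1 hb6
          ha0 ha2 ha1 ha3 ha5 ha7 ha4 ha6 hrel
        refine ⟨q, hq, ?_⟩
        intro k i
        fin_cases i
        exacts [hv k 0, hv k 5, hv k 2, hv k 7, hv k 4, hv k 1, hv k 6, hv k 3]
      · have hrel : ∀ v : V4, (a ⬝ᵥ v) * (a' ⬝ᵥ v) = 0 → (c ⬝ᵥ v) * (c' ⬝ᵥ v) = 0 →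
            (b ⬝ᵥ v) * (b' ⬝ᵥ v) = 0 := by
          intro v hv1 hv2
          have h5 := hpt v
          rw [hv1, hv2] at h5
          have h6 : g 1 * ((b ⬝ᵥ v) * (b' ⬝ᵥ v)) = 0 := by linarith
          exact (mul_eq_zero.mp h6).resolve_left hk
        obtain ⟨q, hq, hv⟩ := core ![u 0, u 1, u 3, u 2, u 5, u 4, u 6, u 7] a a' c c' b b'
          hbne hb'ne ha0 ha1 ha3 ha2 ha5 ha4 ha6 ha7 hc0 hc2 hc5 hc7 hd1 hd3 hd4 hd6
          hb0 hb3 hb4 hb7 hb1 hb2 hb5 hb6 hrel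
        refine ⟨q, hq, ?_⟩
        intro k i
        fin_cases i
        exacts [hv k 0, hv k 1, hv k 3, hv k 2, hv k 5, hv k 4, hv k 6, hv k 7]
      · have hrel : ∀ v : V4, (a ⬝ᵥ v) * (a' ⬝ᵥ v) = 0 → (b ⬝ᵥ v) * (b' ⬝ᵥ v) = 0 →
            (c ⬝ᵥ v) * (c' ⬝ᵥ v) = 0 := by
          intro v hv1 hv2
          have h5 := hpt v
          rw [hv1, hv2] at h5
          have h6 : g 2 * ((c ⬝ᵥ v) * (c' ⬝ᵥ v)) = 0 := by linarith
          exact (mul_eq_zero.mp h6).resolve_left hk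
        obtain ⟨q, hq, hv⟩ := core u a a' b b' c c' hcne hc'ne
          ha0 ha1 ha2 ha3 ha4 ha5 ha6 ha7 hb0 hb3 hb4 hb7 hb1 hb2 hb5 hb6
          hc0 hc2 hc5 hc7 hd1 hd3 hd4 hd6 hrel
        exact ⟨q, hq, hv⟩
  obtain ⟨q, hq, hv⟩ := claimC
  have hnli := rank_arg u q hq hv
  obtain ⟨g, hg, i, hi⟩ := Fintype.not_linearIndependent_iff.mp hnli
  exact ⟨g, hg, i, hi⟩


noncomputable def Qmat (q : V10) : Matrix (Fin 4) (Fin 4) ℝ :=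
  Matrix.of ![![q 0, q 4 / 2, q 5 / 2, q 6 / 2],
    ![q 4 / 2, q 1, q 7 / 2, q 8 / 2],
    ![q 5 / 2, q 7 / 2, q 2, q 9 / 2],
    ![q 6 / 2, q 8 / 2, q 9 / 2, q 3]]

lemma Qmat_form (q : V10) (v : V4) : v ⬝ᵥ (Qmat q).mulVec v = sig v ⬝ᵥ q := by
  have hq10 : q = ![q 0, q 1, q 2, q 3, q 4, q 5, q 6, q 7, q 8, q 9] := by
    funext j
    fin_cases j <;> rfl
  conv_rhs => rw [hq10]
  simp [Qmat, sig, Matrix.mulVec, dotProduct, Fin.sum_univ_succ,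
    show Fin.succ (2 : Fin 3) = (3 : Fin 4) from rfl]
  ring

lemma Qmat_symm (q : V10) : (Qmat q)ᵀ = Qmat q := by
  ext i j
  fin_cases i <;> fin_cases j <;> rfl

lemma Qmat_ne_zero {q : V10} (hq : q ≠ 0) : Qmat q ≠ 0 := by
  intro h
  apply hq
  have hent : ∀ i1 i2 : Fin 4, Qmat q i1 i2 = 0 := by
    intro i1 i2
    rw [h]
    rfl
  funext j
  fin_cases j
  · exact hent 0 0
  · exact hent 1 1
  · exact hent 2 2
  · exact hent 3 3
  · have hx : q 4 / 2 = 0 := hent 0 1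
    show q 4 = 0
    linarith
  · have hx : q 5 / 2 = 0 := hent 0 2
    show q 5 = 0
    linarith
  · have hx : q 6 / 2 = 0 := hent 0 3
    show q 6 = 0
    linarith
  · have hx : q 7 / 2 = 0 := hent 1 2
    show q 7 = 0
    linarith
  · have hx : q 8 / 2 = 0 := hent 1 3
    show q 8 = 0
    linarith
  · have hx : q 9 / 2 = 0 := hent 2 3
    show q 9 = 0
    linarith

lemma row_facts (r0 r1 r2 r3 n : V4) (h : (Matrix.of ![r0, r1, r2, r3]) *ᵥ n = 0) :
    n ⬝ᵥ r0 = 0 ∧ n ⬝ᵥ r1 = 0 ∧ n ⬝ᵥ r2 = 0 ∧ n ⬝ᵥ r3 = 0 := by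
  have h0 := congrFun h 0
  have h1 := congrFun h 1
  have h2 := congrFun h 2
  have h3 := congrFun h 3
  simp only [Matrix.mulVec, Matrix.of_apply, Matrix.cons_val_zero, Matrix.cons_val_one,
    Matrix.head_cons, Matrix.cons_val_two, Matrix.tail_cons, Matrix.cons_val_three,
    Pi.zero_apply] at h0 h1 h2 h3
  exact ⟨by rwa [dotProduct_comm], by rwa [dotProduct_comm], by rwa [dotProduct_comm],
    by rwa [dotProduct_comm]⟩

end QuadCube

open QuadCube in
theorem quadric_through_cube_and_two_points
    (P : Fin 8 → Fin 3 → ℝ) (hP : IsCombinatorialCube P) (f₁ f₂ : Fin 3 → ℝ) :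
    ∃ Q : Matrix (Fin 4) (Fin 4) ℝ, Q ≠ 0 ∧ Qᵀ = Q ∧
      (∀ i : Fin 8, hom3 (P i) ⬝ᵥ Q.mulVec (hom3 (P i)) = 0) ∧
      hom3 f₁ ⬝ᵥ Q.mulVec (hom3 f₁) = 0 ∧
      hom3 f₂ ⬝ᵥ Q.mulVec (hom3 f₂) = 0 := by
  obtain ⟨h1, h2, h3, h4, h5, h6⟩ := hP
  obtain ⟨a, hane, hamv⟩ := Matrix.exists_mulVec_eq_zero_iff.mpr h1
  obtain ⟨a', ha'ne, ha'mv⟩ := Matrix.exists_mulVec_eq_zero_iff.mpr h2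
  obtain ⟨b, hbne, hbmv⟩ := Matrix.exists_mulVec_eq_zero_iff.mpr h3
  obtain ⟨b', hb'ne, hb'mv⟩ := Matrix.exists_mulVec_eq_zero_iff.mpr h4
  obtain ⟨c, hcne, hcmv⟩ := Matrix.exists_mulVec_eq_zero_iff.mpr h5
  obtain ⟨c', hc'ne, hc'mv⟩ := Matrix.exists_mulVec_eq_zero_iff.mpr h6
  obtain ⟨ha0, ha1, ha2, ha3⟩ := row_facts _ _ _ _ a hamv
  obtain ⟨ha4, ha5, ha6, ha7⟩ := row_facts _ _ _ _ a' ha'mv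
  obtain ⟨hb0, hb3, hb4, hb7⟩ := row_facts _ _ _ _ b hbmv
  obtain ⟨hb1, hb2, hb5, hb6⟩ := row_facts _ _ _ _ b' hb'mv
  obtain ⟨hc0, hc2, hc5, hc7⟩ := row_facts _ _ _ _ c hcmv
  obtain ⟨hd1, hd3, hd4, hd6⟩ := row_facts _ _ _ _ c' hc'mv
  obtain ⟨g, hg, i0, hgi⟩ := key (fun i => hom3 (P i)) a a' b b' c c'
    hane ha'ne hbne hb'ne hcne hc'ne
    ha0 ha1 ha2 ha3 ha4 ha5 ha6 ha7 hb0 hb3 hb4 hb7 hb1 hb2 hb5 hb6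
    hc0 hc2 hc5 hc7 hd1 hd3 hd4 hd6
  have hΛmv : (Matrix.of ![sig (hom3 (P 0)), sig (hom3 (P 1)), sig (hom3 (P 2)),
      sig (hom3 (P 3)), sig (hom3 (P 4)), sig (hom3 (P 5)), sig (hom3 (P 6)),
      sig (hom3 (P 7)), sig (hom3 f₁), sig (hom3 f₂)])ᵀ *ᵥ
      ![g 0, g 1, g 2, g 3, g 4, g 5, g 6, g 7, 0, 0] = 0 := by
    funext j
    have hgj := congrFun hg j
    rw [Finset.sum_apply] at hgj
    simp only [Fin.sum_univ_eight, Pi.smul_apply, smul_eq_mul, Pi.zero_apply] at hgj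
    simp only [Matrix.mulVec, Matrix.transpose_apply, dotProduct, Fin.sum_univ_succ,
      Matrix.of_apply, Matrix.cons_val_zero, Matrix.cons_val_succ, Pi.zero_apply,
      Finset.univ_unique, Finset.sum_const, Fin.sum_univ_zero, mul_zero, add_zero,
      Finset.sum_singleton, Matrix.cons_val_fin_one, zero_mul, zero_add, Fin.isValue]
    linear_combination hgj
  have hdet : (Matrix.of ![sig (hom3 (P 0)), sig (hom3 (P 1)), sig (hom3 (P 2)),
      sig (hom3 (P 3)), sig (hom3 (P 4)), sig (hom3 (P 5)), sig (hom3 (P 6)),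
      sig (hom3 (P 7)), sig (hom3 f₁), sig (hom3 f₂)]).det = 0 := by
    rw [← Matrix.det_transpose]
    apply Matrix.exists_mulVec_eq_zero_iff.mp
    refine ⟨![g 0, g 1, g 2, g 3, g 4, g 5, g 6, g 7, 0, 0], ?_, hΛmv⟩
    intro h0
    apply hgi
    fin_cases i0
    exacts [congrFun h0 0, congrFun h0 1, congrFun h0 2, congrFun h0 3,
      congrFun h0 4, congrFun h0 5, congrFun h0 6, congrFun h0 7]
  obtain ⟨q, hqne, hqmv⟩ := Matrix.exists_mulVec_eq_zero_iff.mpr hdet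
  have hrow : ∀ i : Fin 10, (Matrix.of ![sig (hom3 (P 0)), sig (hom3 (P 1)),
      sig (hom3 (P 2)), sig (hom3 (P 3)), sig (hom3 (P 4)), sig (hom3 (P 5)),
      sig (hom3 (P 6)), sig (hom3 (P 7)), sig (hom3 f₁), sig (hom3 f₂)]) i ⬝ᵥ q = 0 :=
    fun i => congrFun hqmv i
  refine ⟨Qmat q, Qmat_ne_zero hqne, Qmat_symm q, ?_, ?_, ?_⟩
  · intro i
    rw [Qmat_form]
    fin_cases i
    exacts [hrow 0, hrow 1, hrow 2, hrow 3, hrow 4, hrow 5, hrow 6, hrow 7]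
  · rw [Qmat_form]
    exact hrow 8
  · rw [Qmat_form]
    exact hrow 9
end

section
/- Let P₁,…,P₈ ∈ ℝ³ be the vertices of a combinatorial cube and A₁, A₂ ∈ ℝ^{3×4} arbitrary cameras. Let Z ∈ ℝ^{8×9} be the matrix whose i-th row is (A₁(Pᵢ,1)) ⊗ (A₂(Pᵢ,1)). Then rank(Z) ≤ 7; in particular the kernel of Z has dimension at least 2, so Z does not determine the fundamental matrix uniquely up to scale. -/
open Matrix


open Matrix

namespace EightPt

noncomputable section

abbrev V10 := EuclideanSpace ℝ (Fin 10)

def dp (u v : Fin 4 → ℝ) : ℝ := ∑ a, u a * v a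

lemma dp_comm (u v : Fin 4 → ℝ) : dp u v = dp v u := by
  simp [dp, mul_comm]

lemma dp_add_left (u v w : Fin 4 → ℝ) : dp (u + v) w = dp u w + dp v w := by
  simp [dp, add_mul, Finset.sum_add_distrib]

lemma dp_add_right (u v w : Fin 4 → ℝ) : dp u (v + w) = dp u v + dp u w := by
  simp [dp, mul_add, Finset.sum_add_distrib]

lemma dp_smul_left (c : ℝ) (u w : Fin 4 → ℝ) : dp (c • u) w = c * dp u w := by
  simp [dp, Finset.mul_sum, mul_assoc]

lemma dp_sub_left (u v w : Fin 4 → ℝ) : dp (u - v) w = dp u w - dp v w := by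
  simp [dp, sub_mul, Finset.sum_sub_distrib]

lemma dp_smul_right (c : ℝ) (u w : Fin 4 → ℝ) : dp u (c • w) = c * dp u w := by
  simp [dp, Finset.mul_sum]; ring_nf; simp [mul_comm, mul_assoc, mul_left_comm]

lemma dp_sub_right (u v w : Fin 4 → ℝ) : dp u (v - w) = dp u v - dp u w := by
  simp [dp, mul_sub, Finset.sum_sub_distrib]

lemma dp_zero_left (w : Fin 4 → ℝ) : dp 0 w = 0 := by simp [dp]

lemma dp_self_eq_zero {u : Fin 4 → ℝ} (h : dp u u = 0) : u = 0 := by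
  funext a
  have h' := (Finset.sum_eq_zero_iff_of_nonneg
    (fun a _ => mul_self_nonneg (u a))).mp h a (Finset.mem_univ a)
  simpa using mul_self_eq_zero.mp h'

lemma dp_self_ne_zero {u : Fin 4 → ℝ} (h : u ≠ 0) : dp u u ≠ 0 :=
  fun hc => h (dp_self_eq_zero hc)

/-- factor matching: product of two linear forms identically zero. -/
lemma FM0 {u v : Fin 4 → ℝ} (h : ∀ y, dp u y * dp v y = 0) (hu : u ≠ 0) : v = 0 := by
  have h1 : dp v u = 0 := by
    have := h u
    rcases mul_eq_zero.mp this with h' | h'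
    · exact absurd h' (dp_self_ne_zero hu)
    · exact h'
  have h2 := h (u + v)
  rw [dp_add_right, dp_add_right, h1] at h2
  have huv : dp u v = 0 := by rw [dp_comm]; exact h1
  rw [huv] at h2
  simp at h2
  rcases h2 with h' | h'
  · exact absurd h' (dp_self_ne_zero hu)
  · exact dp_self_eq_zero h'

/-- kernel inclusion implies proportional. -/
lemma KER1 {n u : Fin 4 → ℝ} (hn : n ≠ 0) (h : ∀ y, dp n y = 0 → dp u y = 0) :
    ∃ c : ℝ, u = c • n := by
  have hnn := dp_self_ne_zero hn
  set c := dp u n / dp n n with hc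
  refine ⟨c, ?_⟩
  set u' := u - c • n with hu'
  have hnu' : dp n u' = 0 := by
    have : dp u' n = 0 := by
      rw [hu', dp_sub_left, dp_smul_left, hc]
      field_simp
      ring
    rw [dp_comm]; exact this
  have huu' : dp u u' = 0 := h u' hnu'
  have : dp u' u' = 0 := by
    rw [hu', dp_sub_left, dp_smul_left, huu', hnu']
    ring
  have h0 := dp_self_eq_zero this
  rw [hu'] at h0
  exact sub_eq_zero.mp h0

/-- the subspace trick : if a product of forms vanishes on {n = 0} ∩ {n' = 0} and
u is somewhere nonzero there, then v vanishes there. -/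
lemma TRICK {n n' u v : Fin 4 → ℝ}
    (h : ∀ y, dp n y = 0 → dp n' y = 0 → dp u y * dp v y = 0)
    (x₀ : Fin 4 → ℝ) (h₀ : dp n x₀ = 0) (h₀' : dp n' x₀ = 0) (hu₀ : dp u x₀ ≠ 0) :
    ∀ y, dp n y = 0 → dp n' y = 0 → dp v y = 0 := by
  have hv₀ : dp v x₀ = 0 := by
    rcases mul_eq_zero.mp (h x₀ h₀ h₀') with h' | h'
    · exact absurd h' hu₀
    · exact h'
  intro y hy hy'
  rcases eq_or_ne (dp u y) 0 with hud | hud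
  · have hsum := h (y + x₀) (by rw [dp_comm, dp_add_left, dp_comm y n, dp_comm x₀ n, hy, h₀]; ring)
      (by rw [dp_comm, dp_add_left, dp_comm y n', dp_comm x₀ n', hy', h₀']; ring)
    rw [dp_add_right, dp_add_right, hud, hv₀, zero_add, add_zero] at hsum
    rcases mul_eq_zero.mp hsum with h' | h'
    · exact absurd h' hu₀
    · exact h'
  · rcases mul_eq_zero.mp (h y hy hy') with h' | h'
    · exact absurd h' hud
    · exact h'

lemma propSym {u v : Fin 4 → ℝ} (hu : u ≠ 0) (h : ∃ c : ℝ, u = c • v) :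
    ∃ c : ℝ, v = c • u := by
  obtain ⟨c, hc⟩ := h
  have hc0 : c ≠ 0 := by rintro rfl; simp at hc; exact hu hc
  exact ⟨c⁻¹, by rw [hc, smul_smul, inv_mul_cancel₀ hc0, one_smul]⟩

/-- two-kernel inclusion implies in span. -/
lemma KER2 {n w u : Fin 4 → ℝ} (hn : n ≠ 0) (hw : w ≠ 0)
    (hEX : ¬ ∃ c : ℝ, w = c • n)
    (h : ∀ y, dp n y = 0 → dp w y = 0 → dp u y = 0) :
    ∃ α β : ℝ, u = α • n + β • w := by
  have hnn := dp_self_ne_zero hn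
  have hww := dp_self_ne_zero hw
  have hd0 : dp n n * dp w w - dp n w ^ 2 ≠ 0 := by
    intro hdz
    have hzz : dp (dp w w • n - dp n w • w) (dp w w • n - dp n w • w) = 0 := by
      rw [dp_sub_left, dp_smul_left, dp_smul_left, dp_sub_right, dp_smul_right,
        dp_smul_right, dp_sub_right, dp_smul_right, dp_smul_right, dp_comm w n]
      linear_combination dp w w * hdz
    have hz0 := dp_self_eq_zero hzz
    rw [sub_eq_zero] at hz0
    apply hEX
    apply propSym hn
    have := congrArg (fun t => (dp w w)⁻¹ • t) hz0
    simp only [smul_smul, inv_mul_cancel₀ hww, one_smul] at this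
    exact ⟨_, this⟩
  set d := dp n n * dp w w - dp n w ^ 2 with hd
  set A := dp u n * dp w w - dp u w * dp n w with hA
  set B := dp u w * dp n n - dp u n * dp n w with hB
  set u' := d • u - A • n - B • w with hu'
  have hnu' : dp n u' = 0 := by
    rw [hu', dp_sub_right, dp_sub_right, dp_smul_right, dp_smul_right, dp_smul_right,
      dp_comm n u, hd, hA, hB]
    ring
  have hwu' : dp w u' = 0 := by
    rw [hu', dp_sub_right, dp_sub_right, dp_smul_right, dp_smul_right, dp_smul_right,
      dp_comm w u, dp_comm w n, hd, hA, hB]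
    ring
  have huu' : dp u u' = 0 := h u' hnu' hwu'
  have hself : dp u' u' = 0 := by
    rw [hu', dp_sub_left, dp_sub_left, dp_smul_left, dp_smul_left, dp_smul_left,
      huu', hnu', hwu']
    ring
  have h0 := dp_self_eq_zero hself
  rw [hu'] at h0
  have heq : d • u = A • n + B • w := by
    have := sub_eq_zero.mp (by rw [sub_sub] at h0; exact h0)
    exact this
  refine ⟨A / d, B / d, ?_⟩
  funext a
  have := congr_fun heq a
  simp only [Pi.smul_apply, Pi.add_apply, smul_eq_mul] at this ⊢
  field_simp
  linarith

section ConsVal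
variable {α : Type*} (a0 a1 a2 a3 a4 a5 a6 a7 a8 a9 : α)

lemma cons_val_5 : (![a0,a1,a2,a3,a4,a5,a6,a7,a8,a9] : Fin 10 → α) 5 = a5 := rfl
lemma cons_val_6 : (![a0,a1,a2,a3,a4,a5,a6,a7,a8,a9] : Fin 10 → α) 6 = a6 := rfl
lemma cons_val_7 : (![a0,a1,a2,a3,a4,a5,a6,a7,a8,a9] : Fin 10 → α) 7 = a7 := rfl
lemma cons_val_8 : (![a0,a1,a2,a3,a4,a5,a6,a7,a8,a9] : Fin 10 → α) 8 = a8 := rfl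
lemma cons_val_9 : (![a0,a1,a2,a3,a4,a5,a6,a7,a8,a9] : Fin 10 → α) 9 = a9 := rfl

end ConsVal

def qv (u v : Fin 4 → ℝ) : V10 := WithLp.toLp 2
  ![u 0 * v 0, u 0 * v 1 + u 1 * v 0, u 0 * v 2 + u 2 * v 0, u 0 * v 3 + u 3 * v 0,
    u 1 * v 1, u 1 * v 2 + u 2 * v 1, u 1 * v 3 + u 3 * v 1,
    u 2 * v 2, u 2 * v 3 + u 3 * v 2, u 3 * v 3]

lemma inner_qv (u v y : Fin 4 → ℝ) :
    (inner ℝ (qv u v) (WithLp.toLp 2 (veronese y) : V10) : ℝ) = dp u y * dp v y := by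
  simp [qv, veronese, dp, PiLp.inner_apply, Fin.sum_univ_succ, RCLike.inner_apply,
    show (Fin.succ 2 : Fin 4) = 3 from rfl]
  ring

/-- `qv w ·` as a linear map. -/
def qvL (w : Fin 4 → ℝ) : (Fin 4 → ℝ) →ₗ[ℝ] V10 where
  toFun s := qv w s
  map_add' a b := by
    ext i
    fin_cases i <;>
      simp [qv, cons_val_5, cons_val_6, cons_val_7, cons_val_8, cons_val_9] <;> ring
  map_smul' c a := by
    ext i
    fin_cases i <;>
      simp [qv, cons_val_5, cons_val_6, cons_val_7, cons_val_8, cons_val_9] <;> ring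

def vv (x : Fin 8 → (Fin 4 → ℝ)) : Fin 8 → V10 := fun i => WithLp.toLp 2 (veronese (x i))

lemma card_le_of_ortho (x : Fin 8 → (Fin 4 → ℝ))
    (H : LinearIndependent ℝ (vv x)) (S : Submodule ℝ V10) (t : Finset (Fin 8))
    (hmem : ∀ i ∈ t, ∀ u ∈ S, (inner ℝ (vv x i) u : ℝ) = 0) :
    t.card + Module.finrank ℝ S ≤ 10 := by
  classical
  set K : Submodule ℝ V10 := Submodule.span ℝ (Set.range (vv x ∘ (Subtype.val : t → Fin 8)))
    with hK
  have hKrank : Module.finrank ℝ K = t.card := by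
    rw [hK, finrank_span_eq_card (H.comp _ Subtype.val_injective)]
    simp
  have hSle : S ≤ Kᗮ := by
    intro u hu
    rw [Submodule.mem_orthogonal]
    intro w hw
    induction hw using Submodule.span_induction with
    | mem w hw' =>
      obtain ⟨i, rfl⟩ := hw'
      exact hmem _ i.2 u hu
    | zero => exact inner_zero_left u
    | add _ _ _ _ h1 h2 => rw [inner_add_left, h1, h2]; ring
    | smul c _ _ h1 => rw [real_inner_smul_left, h1]; ring
  have hSK : Module.finrank ℝ S ≤ Module.finrank ℝ Kᗮ := Submodule.finrank_mono hSle
  have hsum := Submodule.finrank_add_finrank_orthogonal K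
  have h10 : Module.finrank ℝ V10 = 10 := by
    rw [finrank_euclideanSpace]; simp
  omega

lemma inner_vv_qv (x : Fin 8 → (Fin 4 → ℝ)) (i : Fin 8) (u v : Fin 4 → ℝ) :
    (inner ℝ (vv x i) (qv u v) : ℝ) = dp u (x i) * dp v (x i) := by
  rw [real_inner_comm]; exact inner_qv u v (x i)

/-- seven points on a hyperplane kill independence. -/
lemma seven (x : Fin 8 → (Fin 4 → ℝ)) (H : LinearIndependent ℝ (vv x))
    (w : Fin 4 → ℝ) (hw : w ≠ 0) (t : Finset (Fin 8)) (hcard : 7 ≤ t.card)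
    (hmem : ∀ i ∈ t, dp w (x i) = 0) : False := by
  have hker : LinearMap.ker (qvL w) = ⊥ := by
    rw [LinearMap.ker_eq_bot']
    intro s hs
    have hz : ∀ y, dp w y * dp s y = 0 := by
      intro y
      have : (inner ℝ (qvL w s) (WithLp.toLp 2 (veronese y) : V10) : ℝ) = 0 := by
        rw [hs, inner_zero_left]
      rwa [show qvL w s = qv w s from rfl, inner_qv] at this
    exact FM0 hz hw
  have hrank : Module.finrank ℝ (LinearMap.range (qvL w)) = 4 := by
    have := LinearMap.finrank_range_add_finrank_ker (qvL w)
    rw [hker, finrank_bot, Module.finrank_fin_fun] at this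
    omega
  have := card_le_of_ortho x H (LinearMap.range (qvL w)) t ?_
  · omega
  · rintro i hi u ⟨s, rfl⟩
    rw [show qvL w s = qv w s from rfl, inner_vv_qv, hmem i hi]
    ring

/-- six points on a hyperplane, all points on a conic not containing the hyperplane. -/
lemma six (x : Fin 8 → (Fin 4 → ℝ)) (H : LinearIndependent ℝ (vv x))
    (w u v : Fin 4 → ℝ) (hw : w ≠ 0) (hu : u ≠ 0) (hv : v ≠ 0)
    (hEXu : ¬ ∃ c : ℝ, u = c • w) (hEXv : ¬ ∃ c : ℝ, v = c • w)
    (hquad : ∀ i, dp u (x i) * dp v (x i) = 0)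
    (t : Finset (Fin 8)) (hcard : 6 ≤ t.card)
    (hmem : ∀ i ∈ t, dp w (x i) = 0) : False := by
  classical
  set f : ((Fin 4 → ℝ) × ℝ) →ₗ[ℝ] V10 :=
    (qvL w).comp (LinearMap.fst ℝ (Fin 4 → ℝ) ℝ) +
      (LinearMap.toSpanSingleton ℝ V10 (qv u v)).comp (LinearMap.snd ℝ (Fin 4 → ℝ) ℝ)
    with hf
  have hfapp : ∀ s γ, f (s, γ) = qv w s + γ • qv u v := by
    intro s γ; rfl
  have hker : LinearMap.ker f = ⊥ := by
    rw [LinearMap.ker_eq_bot']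
    rintro ⟨s, γ⟩ hs
    rw [hfapp] at hs
    have hz : ∀ y, dp w y * dp s y + γ * (dp u y * dp v y) = 0 := by
      intro y
      have : (inner ℝ (qv w s + γ • qv u v) (WithLp.toLp 2 (veronese y) : V10) : ℝ) = 0 := by
        rw [hs, inner_zero_left]
      rwa [inner_add_left, real_inner_smul_left, inner_qv, inner_qv] at this
    have hγ : γ = 0 := by
      by_contra hγ
      have hres : ∀ y, dp w y = 0 → dp u y * dp v y = 0 := by
        intro y hy
        have := hz y
        rw [hy, zero_mul, zero_add] at this
        rcases mul_eq_zero.mp this with h | h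
        · exact absurd h hγ
        · exact h
      have hwit : ∃ x₀, dp w x₀ = 0 ∧ dp u x₀ ≠ 0 := by
        by_contra hc
        push_neg at hc
        exact hEXu (KER1 hw hc)
      obtain ⟨x₀, h₀, hu₀⟩ := hwit
      have := TRICK (n' := 0) (fun y hy _ => hres y hy) x₀ h₀ (dp_zero_left x₀) hu₀
      exact hEXv (KER1 hw (fun y hy => this y hy (dp_zero_left y)))
    rw [hγ, zero_smul, add_zero] at hs
    have hz' : ∀ y, dp w y * dp s y = 0 := by
      intro y
      have : (inner ℝ (qv w s) (WithLp.toLp 2 (veronese y) : V10) : ℝ) = 0 := by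
        rw [hs, inner_zero_left]
      rwa [inner_qv] at this
    have : s = 0 := FM0 hz' hw
    simp [this, hγ]
  have hrank : Module.finrank ℝ (LinearMap.range f) = 5 := by
    have := LinearMap.finrank_range_add_finrank_ker f
    rw [hker, finrank_bot, Module.finrank_prod, Module.finrank_fin_fun,
      Module.finrank_self] at this
    omega
  have := card_le_of_ortho x H (LinearMap.range f) t ?_
  · omega
  · rintro i hi _ ⟨⟨s, γ⟩, rfl⟩
    rw [hfapp, inner_add_right, real_inner_smul_right, inner_vv_qv, inner_vv_qv,
      hmem i hi, hquad i]
    ring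
lemma kerOf {m n : Fin 4 → ℝ} (hm : m ≠ 0) (h : ∃ c : ℝ, m = c • n) :
    ∀ z, dp m z = 0 → dp n z = 0 := by
  obtain ⟨c, hc⟩ := h
  have hc0 : c ≠ 0 := by rintro rfl; simp at hc; exact hm hc
  intro z hz
  rw [hc, dp_smul_left] at hz
  exact (mul_eq_zero.mp hz).resolve_left hc0

lemma kerTo {m n : Fin 4 → ℝ} (h : ∃ c : ℝ, m = c • n) :
    ∀ z, dp n z = 0 → dp m z = 0 := by
  obtain ⟨c, hc⟩ := h
  intro z hz
  rw [hc, dp_smul_left, hz, mul_zero]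

lemma bothProp {m n1 n2 : Fin 4 → ℝ} (hm : m ≠ 0) (hn1 : n1 ≠ 0) (hn2 : n2 ≠ 0)
    (hEX1 : ¬ ∃ c : ℝ, m = c • n1) (hEX2 : ¬ ∃ c : ℝ, m = c • n2)
    (hres : ∀ y, dp m y = 0 → dp n1 y * dp n2 y = 0) : False := by
  by_cases hall : ∀ y, dp m y = 0 → dp n1 y = 0
  · exact hEX1 (propSym hn1 (KER1 hm hall))
  · push_neg at hall
    obtain ⟨x₀, h₀, h₀'⟩ := hall
    have := TRICK (n' := 0) (fun y hy _ => hres y hy) x₀ h₀ (dp_zero_left x₀) h₀'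
    exact hEX2 (propSym hn2 (KER1 hm (fun y hy => this y hy (dp_zero_left y))))

lemma exclAux (x : Fin 8 → (Fin 4 → ℝ)) (H : LinearIndependent ℝ (vv x))
    (n w p q : Fin 4 → ℝ) (hn : n ≠ 0) (hw : w ≠ 0) (hp : p ≠ 0) (hq : q ≠ 0)
    (Sn Sw Sp Sq : Finset (Fin 8))
    (hin : ∀ i ∈ Sn, dp n (x i) = 0) (hiw : ∀ i ∈ Sw, dp w (x i) = 0)
    (hip : ∀ i ∈ Sp, dp p (x i) = 0) (hiq : ∀ i ∈ Sq, dp q (x i) = 0)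
    (hwn : ∃ c : ℝ, w = c • n)
    (hres : ∀ y, dp n y = 0 → dp p y * dp q y = 0)
    (h7p : 7 ≤ (Sn ∪ Sw ∪ Sp).card) (h7q : 7 ≤ (Sn ∪ Sw ∪ Sq).card) : False := by
  have hwmem : ∀ i ∈ Sw, dp n (x i) = 0 := fun i hi => kerOf hw hwn _ (hiw i hi)
  by_cases hall : ∀ y, dp n y = 0 → dp p y = 0
  · have hprop := KER1 hn hall
    refine seven x H n hn (Sn ∪ Sw ∪ Sp) h7p ?_
    intro i hi
    rcases Finset.mem_union.mp hi with hi' | hi'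
    · rcases Finset.mem_union.mp hi' with h2 | h2
      · exact hin i h2
      · exact hwmem i h2
    · exact kerOf hp hprop _ (hip i hi')
  · push_neg at hall
    obtain ⟨x₀, h₀, h₀'⟩ := hall
    have htr := TRICK (n' := 0) (fun y hy _ => hres y hy) x₀ h₀ (dp_zero_left x₀) h₀'
    have hprop := KER1 hn (fun y hy => htr y hy (dp_zero_left y))
    refine seven x H n hn (Sn ∪ Sw ∪ Sq) h7q ?_
    intro i hi
    rcases Finset.mem_union.mp hi with hi' | hi'
    · rcases Finset.mem_union.mp hi' with h2 | h2
      · exact hin i h2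
      · exact hwmem i h2
    · exact kerOf hq hprop _ (hiq i hi')

/-- degenerate case: two of the three quadrics are proportional. -/
lemma deg2 (x : Fin 8 → (Fin 4 → ℝ)) (H : LinearIndependent ℝ (vv x))
    (n1 n2 m1 m2 e1 e2 : Fin 4 → ℝ)
    (hn1 : n1 ≠ 0) (hn2 : n2 ≠ 0) (hm1 : m1 ≠ 0) (hm2 : m2 ≠ 0)
    (he1 : e1 ≠ 0) (he2 : e2 ≠ 0)
    (C1 C2 D1 D2 E1 E2 : Finset (Fin 8))
    (hiC1 : ∀ i ∈ C1, dp n1 (x i) = 0) (hiC2 : ∀ i ∈ C2, dp n2 (x i) = 0)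
    (hiD1 : ∀ i ∈ D1, dp m1 (x i) = 0) (hiD2 : ∀ i ∈ D2, dp m2 (x i) = 0)
    (hiE1 : ∀ i ∈ E1, dp e1 (x i) = 0) (hiE2 : ∀ i ∈ E2, dp e2 (x i) = 0)
    (a : ℝ) (ha : a ≠ 0)
    (hid : ∀ y, dp n1 y * dp n2 y = a * (dp m1 y * dp m2 y))
    (hquadE : ∀ i, dp e1 (x i) * dp e2 (x i) = 0)
    (hCuniv : C1 ∪ C2 = Finset.univ)
    (h611 : 6 ≤ (C1 ∪ D1).card) (h612 : 6 ≤ (C1 ∪ D2).card)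
    (s111 : 7 ≤ (C1 ∪ D1 ∪ E1).card) (s112 : 7 ≤ (C1 ∪ D1 ∪ E2).card)
    (s121 : 7 ≤ (C1 ∪ D2 ∪ E1).card) (s122 : 7 ≤ (C1 ∪ D2 ∪ E2).card) : False := by
  have hres1 : ∀ y, dp n1 y = 0 → dp m1 y * dp m2 y = 0 := by
    intro y hy
    have h2 := hid y
    rw [hy, zero_mul] at h2
    exact (mul_eq_zero.mp h2.symm).resolve_left ha
  have hres2 : ∀ y, dp n2 y = 0 → dp m1 y * dp m2 y = 0 := by
    intro y hy
    have h2 := hid y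
    rw [hy, mul_zero] at h2
    exact (mul_eq_zero.mp h2.symm).resolve_left ha
  have step1 : (∃ c : ℝ, m1 = c • n1) ∨ (∃ c : ℝ, m2 = c • n1) := by
    by_cases hall : ∀ y, dp n1 y = 0 → dp m1 y = 0
    · exact Or.inl (KER1 hn1 hall)
    · push_neg at hall
      obtain ⟨x₀, h₀, h₀'⟩ := hall
      have := TRICK (n' := 0) (fun y hy _ => hres1 y hy) x₀ h₀ (dp_zero_left x₀) h₀'
      exact Or.inr (KER1 hn1 (fun y hy => this y hy (dp_zero_left y)))
  have step2 : (∃ c : ℝ, m1 = c • n2) ∨ (∃ c : ℝ, m2 = c • n2) := by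
    by_cases hall : ∀ y, dp n2 y = 0 → dp m1 y = 0
    · exact Or.inl (KER1 hn2 hall)
    · push_neg at hall
      obtain ⟨x₀, h₀, h₀'⟩ := hall
      have := TRICK (n' := 0) (fun y hy _ => hres2 y hy) x₀ h₀ (dp_zero_left x₀) h₀'
      exact Or.inr (KER1 hn2 (fun y hy => this y hy (dp_zero_left y)))
  -- helper for the mixed branches
  have finish : ∀ (D : Finset (Fin 8)), (∀ i ∈ D, dp n1 (x i) = 0) →
      6 ≤ (C1 ∪ D).card → 7 ≤ (C1 ∪ D ∪ E1).card → 7 ≤ (C1 ∪ D ∪ E2).card → False := by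
    intro D hD h6 h71 h72
    have hmemCD : ∀ i ∈ C1 ∪ D, dp n1 (x i) = 0 := by
      intro i hi
      rcases Finset.mem_union.mp hi with h' | h'
      · exact hiC1 i h'
      · exact hD i h'
    by_cases hE1p : ∃ c : ℝ, e1 = c • n1
    · refine seven x H n1 hn1 (C1 ∪ D ∪ E1) h71 ?_
      intro i hi
      rcases Finset.mem_union.mp hi with h' | h'
      · exact hmemCD i h'
      · exact kerOf he1 hE1p _ (hiE1 i h')
    · by_cases hE2p : ∃ c : ℝ, e2 = c • n1
      · refine seven x H n1 hn1 (C1 ∪ D ∪ E2) h72 ?_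
        intro i hi
        rcases Finset.mem_union.mp hi with h' | h'
        · exact hmemCD i h'
        · exact kerOf he2 hE2p _ (hiE2 i h')
      · exact six x H n1 e1 e2 hn1 he1 he2 hE1p hE2p hquadE (C1 ∪ D) h6 hmemCD
  rcases step1 with hp1 | hp1 <;> rcases step2 with hp2 | hp2
  · -- m1 ~ n1 and m1 ~ n2 : all eight points on ker n1
    have hmem : ∀ i ∈ C1 ∪ C2, dp n1 (x i) = 0 := by
      intro i hi
      rcases Finset.mem_union.mp hi with h' | h'
      · exact hiC1 i h'
      · exact kerOf hm1 hp1 _ (kerTo hp2 _ (hiC2 i h'))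
    refine seven x H n1 hn1 (C1 ∪ C2) ?_ hmem
    rw [hCuniv, Finset.card_univ]
    simp
  · -- m1 ~ n1, m2 ~ n2 : ker n1 ⊇ C1 ∪ D1
    exact finish D1 (fun i hi => kerOf hm1 hp1 _ (hiD1 i hi)) h611 s111 s112
  · -- m2 ~ n1, m1 ~ n2 : ker n1 ⊇ C1 ∪ D2
    exact finish D2 (fun i hi => kerOf hm2 hp1 _ (hiD2 i hi)) h612 s121 s122
  · -- m2 ~ n1 and m2 ~ n2
    have hmem : ∀ i ∈ C1 ∪ C2, dp n1 (x i) = 0 := by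
      intro i hi
      rcases Finset.mem_union.mp hi with h' | h'
      · exact hiC1 i h'
      · exact kerOf hm2 hp1 _ (kerTo hp2 _ (hiC2 i h'))
    refine seven x H n1 hn1 (C1 ∪ C2) ?_ hmem
    rw [hCuniv, Finset.card_univ]
    simp
/-- degenerate case: a genuine three-term linear relation among the quadrics. -/
lemma deg3 (x : Fin 8 → (Fin 4 → ℝ)) (H : LinearIndependent ℝ (vv x))
    (n1 n2 m1 m2 m3 m4 : Fin 4 → ℝ)
    (hn1 : n1 ≠ 0) (hn2 : n2 ≠ 0) (hm1 : m1 ≠ 0) (hm2 : m2 ≠ 0)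
    (hm3 : m3 ≠ 0) (hm4 : m4 ≠ 0)
    (C1 C2 A1 A2 B1 B2 : Finset (Fin 8))
    (hiC1 : ∀ i ∈ C1, dp n1 (x i) = 0) (hiC2 : ∀ i ∈ C2, dp n2 (x i) = 0)
    (hiA1 : ∀ i ∈ A1, dp m1 (x i) = 0) (hiA2 : ∀ i ∈ A2, dp m2 (x i) = 0)
    (hiB1 : ∀ i ∈ B1, dp m3 (x i) = 0) (hiB2 : ∀ i ∈ B2, dp m4 (x i) = 0)
    (a b : ℝ) (ha : a ≠ 0) (hb : b ≠ 0)
    (hid : ∀ y, dp n1 y * dp n2 y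
      = a * (dp m1 y * dp m2 y) + b * (dp m3 y * dp m4 y))
    (hquadA : ∀ i, dp m1 (x i) * dp m2 (x i) = 0)
    (c111 : 7 ≤ (C1 ∪ A1 ∪ B1).card) (c112 : 7 ≤ (C1 ∪ A1 ∪ B2).card)
    (c121 : 7 ≤ (C1 ∪ A2 ∪ B1).card) (c122 : 7 ≤ (C1 ∪ A2 ∪ B2).card)
    (c211 : 7 ≤ (C2 ∪ A1 ∪ B1).card) (c212 : 7 ≤ (C2 ∪ A1 ∪ B2).card)
    (c221 : 7 ≤ (C2 ∪ A2 ∪ B1).card) (c222 : 7 ≤ (C2 ∪ A2 ∪ B2).card)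
    (d11 : 6 ≤ (C1 ∪ (A1 ∩ B1) ∪ (A1 ∩ B2)).card)
    (d12 : 6 ≤ (C1 ∪ (A1 ∩ B1) ∪ (A2 ∩ B2)).card)
    (d21 : 6 ≤ (C1 ∪ (A2 ∩ B1) ∪ (A1 ∩ B2)).card)
    (d22 : 6 ≤ (C1 ∪ (A2 ∩ B1) ∪ (A2 ∩ B2)).card) : False := by
  have swap1 : ∀ S T U : Finset (Fin 8), 7 ≤ (S ∪ T ∪ U).card → 7 ≤ (S ∪ U ∪ T).card := by
    intro S T U h
    rwa [Finset.union_right_comm] at h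
  -- exclusion of proportionality between an m and an n
  have eA1 : ¬ ∃ c : ℝ, m1 = c • n1 := by
    intro hex
    refine exclAux x H n1 m1 m3 m4 hn1 hm1 hm3 hm4 C1 A1 B1 B2 hiC1 hiA1 hiB1 hiB2 hex
      ?_ c111 c112
    intro y hy
    have h1y : dp m1 y = 0 := kerTo hex y hy
    have h2 := hid y
    rw [hy, zero_mul, h1y, zero_mul, mul_zero, zero_add] at h2
    exact (mul_eq_zero.mp h2.symm).resolve_left hb
  have eA2 : ¬ ∃ c : ℝ, m2 = c • n1 := by
    intro hex
    refine exclAux x H n1 m2 m3 m4 hn1 hm2 hm3 hm4 C1 A2 B1 B2 hiC1 hiA2 hiB1 hiB2 hex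
      ?_ c121 c122
    intro y hy
    have h1y : dp m2 y = 0 := kerTo hex y hy
    have h2 := hid y
    rw [hy, zero_mul, h1y, mul_zero, mul_zero, zero_add] at h2
    exact (mul_eq_zero.mp h2.symm).resolve_left hb
  have eB1 : ¬ ∃ c : ℝ, m3 = c • n1 := by
    intro hex
    refine exclAux x H n1 m3 m1 m2 hn1 hm3 hm1 hm2 C1 B1 A1 A2 hiC1 hiB1 hiA1 hiA2 hex
      ?_ (swap1 _ _ _ c111) (swap1 _ _ _ c121)
    intro y hy
    have h1y : dp m3 y = 0 := kerTo hex y hy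
    have h2 := hid y
    rw [hy, zero_mul, h1y, zero_mul, mul_zero, add_zero] at h2
    exact (mul_eq_zero.mp h2.symm).resolve_left ha
  have eB2 : ¬ ∃ c : ℝ, m4 = c • n1 := by
    intro hex
    refine exclAux x H n1 m4 m1 m2 hn1 hm4 hm1 hm2 C1 B2 A1 A2 hiC1 hiB2 hiA1 hiA2 hex
      ?_ (swap1 _ _ _ c112) (swap1 _ _ _ c122)
    intro y hy
    have h1y : dp m4 y = 0 := kerTo hex y hy
    have h2 := hid y
    rw [hy, zero_mul, h1y, mul_zero, mul_zero, add_zero] at h2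
    exact (mul_eq_zero.mp h2.symm).resolve_left ha
  have eB1n2 : ¬ ∃ c : ℝ, m3 = c • n2 := by
    intro hex
    refine exclAux x H n2 m3 m1 m2 hn2 hm3 hm1 hm2 C2 B1 A1 A2 hiC2 hiB1 hiA1 hiA2 hex
      ?_ (swap1 _ _ _ c211) (swap1 _ _ _ c221)
    intro y hy
    have h1y : dp m3 y = 0 := kerTo hex y hy
    have h2 := hid y
    rw [hy, mul_zero, h1y, zero_mul, mul_zero, add_zero] at h2
    exact (mul_eq_zero.mp h2.symm).resolve_left ha
  have eB2n2 : ¬ ∃ c : ℝ, m4 = c • n2 := by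
    intro hex
    refine exclAux x H n2 m4 m1 m2 hn2 hm4 hm1 hm2 C2 B2 A1 A2 hiC2 hiB2 hiA1 hiA2 hex
      ?_ (swap1 _ _ _ c212) (swap1 _ _ _ c222)
    intro y hy
    have h1y : dp m4 y = 0 := kerTo hex y hy
    have h2 := hid y
    rw [hy, mul_zero, h1y, mul_zero, mul_zero, add_zero] at h2
    exact (mul_eq_zero.mp h2.symm).resolve_left ha
  -- restriction identities
  have hres13 : ∀ y, dp n1 y = 0 → dp m3 y = 0 → dp m1 y * dp m2 y = 0 := by
    intro y hy hy3
    have h2 := hid y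
    rw [hy, zero_mul, hy3, zero_mul, mul_zero, add_zero] at h2
    exact (mul_eq_zero.mp h2.symm).resolve_left ha
  have hres14 : ∀ y, dp n1 y = 0 → dp m4 y = 0 → dp m1 y * dp m2 y = 0 := by
    intro y hy hy4
    have h2 := hid y
    rw [hy, zero_mul, hy4, mul_zero, mul_zero, add_zero] at h2
    exact (mul_eq_zero.mp h2.symm).resolve_left ha
  have hK1 : (∃ α β : ℝ, m1 = α • n1 + β • m3) ∨ (∃ α β : ℝ, m2 = α • n1 + β • m3) := by
    by_cases hall : ∀ y, dp n1 y = 0 → dp m3 y = 0 → dp m1 y = 0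
    · exact Or.inl (KER2 hn1 hm3 eB1 hall)
    · push_neg at hall
      obtain ⟨x₀, h₀, h₀', h₀''⟩ := hall
      exact Or.inr (KER2 hn1 hm3 eB1 (TRICK hres13 x₀ h₀ h₀' h₀''))
  have hK2 : (∃ α β : ℝ, m1 = α • n1 + β • m4) ∨ (∃ α β : ℝ, m2 = α • n1 + β • m4) := by
    by_cases hall : ∀ y, dp n1 y = 0 → dp m4 y = 0 → dp m1 y = 0
    · exact Or.inl (KER2 hn1 hm4 eB2 hall)
    · push_neg at hall
      obtain ⟨x₀, h₀, h₀', h₀''⟩ := hall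
      exact Or.inr (KER2 hn1 hm4 eB2 (TRICK hres14 x₀ h₀ h₀' h₀''))
  -- restricted vanishing of the n-quadric
  have hres3u1 : ∀ y, dp m3 y = 0 → dp m1 y = 0 → dp n1 y * dp n2 y = 0 := by
    intro y h3 h1
    rw [hid y, h3, zero_mul, mul_zero, add_zero, h1, zero_mul, mul_zero]
  have hres3u2 : ∀ y, dp m3 y = 0 → dp m2 y = 0 → dp n1 y * dp n2 y = 0 := by
    intro y h3 h1
    rw [hid y, h3, zero_mul, mul_zero, add_zero, h1, mul_zero, mul_zero]
  have hres4u1 : ∀ y, dp m4 y = 0 → dp m1 y = 0 → dp n1 y * dp n2 y = 0 := by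
    intro y h4 h1
    rw [hid y, h4, mul_zero, mul_zero, add_zero, h1, zero_mul, mul_zero]
  have hres4u2 : ∀ y, dp m4 y = 0 → dp m2 y = 0 → dp n1 y * dp n2 y = 0 := by
    intro y h4 h1
    rw [hid y, h4, mul_zero, mul_zero, add_zero, h1, mul_zero, mul_zero]
  -- process a span representation into a line condition
  have process : ∀ (u w : Fin 4 → ℝ), u ≠ 0 → w ≠ 0 → (¬ ∃ c : ℝ, u = c • n1) →
      (¬ ∃ c : ℝ, w = c • n1) → (¬ ∃ c : ℝ, w = c • n2) →
      (∀ y, dp w y = 0 → dp u y = 0 → dp n1 y * dp n2 y = 0) →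
      (∃ α β : ℝ, u = α • n1 + β • w) →
      ∀ y, dp u y = 0 → dp w y = 0 → dp n1 y = 0 := by
    intro u w hu hw hEXu hEXw1 hEXw2 hresw hspan
    obtain ⟨α, β, hc⟩ := hspan
    by_cases hα : α = 0
    · exfalso
      refine bothProp hw hn1 hn2 hEXw1 hEXw2 ?_
      intro y hwy
      have huy : dp u y = 0 := by
        rw [hc, hα, zero_smul, zero_add, dp_smul_left, hwy, mul_zero]
      exact hresw y hwy huy
    · by_cases hβ : β = 0
      · exact absurd ⟨α, by rw [hc, hβ, zero_smul, add_zero]⟩ hEXu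
      · intro y hy hwy
        have hdp : dp u y = α * dp n1 y + β * dp w y := by
          rw [hc, dp_add_left, dp_smul_left, dp_smul_left]
        rw [hy, hwy, mul_zero, add_zero] at hdp
        exact (mul_eq_zero.mp hdp.symm).resolve_left hα
  have hL1 : (∀ y, dp m1 y = 0 → dp m3 y = 0 → dp n1 y = 0) ∨
      (∀ y, dp m2 y = 0 → dp m3 y = 0 → dp n1 y = 0) :=
    hK1.imp (process m1 m3 hm1 hm3 eA1 eB1 eB1n2 hres3u1)
      (process m2 m3 hm2 hm3 eA2 eB1 eB1n2 hres3u2)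
  have hL2 : (∀ y, dp m1 y = 0 → dp m4 y = 0 → dp n1 y = 0) ∨
      (∀ y, dp m2 y = 0 → dp m4 y = 0 → dp n1 y = 0) :=
    hK2.imp (process m1 m4 hm1 hm4 eA1 eB2 eB2n2 hres4u1)
      (process m2 m4 hm2 hm4 eA2 eB2 eB2n2 hres4u2)
  rcases hL1 with hL1 | hL1 <;> rcases hL2 with hL2 | hL2
  · refine six x H n1 m1 m2 hn1 hm1 hm2 eA1 eA2 hquadA _ d11 ?_
    intro i hi
    rcases Finset.mem_union.mp hi with h' | h'
    · rcases Finset.mem_union.mp h' with h2 | h2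
      · exact hiC1 i h2
      · obtain ⟨hx1, hx2⟩ := Finset.mem_inter.mp h2
        exact hL1 _ (hiA1 i hx1) (hiB1 i hx2)
    · obtain ⟨hx1, hx2⟩ := Finset.mem_inter.mp h'
      exact hL2 _ (hiA1 i hx1) (hiB2 i hx2)
  · refine six x H n1 m1 m2 hn1 hm1 hm2 eA1 eA2 hquadA _ d12 ?_
    intro i hi
    rcases Finset.mem_union.mp hi with h' | h'
    · rcases Finset.mem_union.mp h' with h2 | h2
      · exact hiC1 i h2
      · obtain ⟨hx1, hx2⟩ := Finset.mem_inter.mp h2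
        exact hL1 _ (hiA1 i hx1) (hiB1 i hx2)
    · obtain ⟨hx1, hx2⟩ := Finset.mem_inter.mp h'
      exact hL2 _ (hiA2 i hx1) (hiB2 i hx2)
  · refine six x H n1 m1 m2 hn1 hm1 hm2 eA1 eA2 hquadA _ d21 ?_
    intro i hi
    rcases Finset.mem_union.mp hi with h' | h'
    · rcases Finset.mem_union.mp h' with h2 | h2
      · exact hiC1 i h2
      · obtain ⟨hx1, hx2⟩ := Finset.mem_inter.mp h2
        exact hL1 _ (hiA2 i hx1) (hiB1 i hx2)
    · obtain ⟨hx1, hx2⟩ := Finset.mem_inter.mp h'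
      exact hL2 _ (hiA1 i hx1) (hiB2 i hx2)
  · refine six x H n1 m1 m2 hn1 hm1 hm2 eA1 eA2 hquadA _ d22 ?_
    intro i hi
    rcases Finset.mem_union.mp hi with h' | h'
    · rcases Finset.mem_union.mp h' with h2 | h2
      · exact hiC1 i h2
      · obtain ⟨hx1, hx2⟩ := Finset.mem_inter.mp h2
        exact hL1 _ (hiA2 i hx1) (hiB1 i hx2)
    · obtain ⟨hx1, hx2⟩ := Finset.mem_inter.mp h'
      exact hL2 _ (hiA2 i hx1) (hiB2 i hx2)
section MV
variable {α : Type*} (A B C : α)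
lemma mv0 : (![A, B, C] : Fin 3 → α) 0 = A := rfl
lemma mv1 : (![A, B, C] : Fin 3 → α) 1 = B := rfl
lemma mv2 : (![A, B, C] : Fin 3 → α) 2 = C := rfl
end MV

/-- The core geometric fact: the veronese images of the eight vertices of a
combinatorial cube are linearly dependent. -/
lemma core (x : Fin 8 → (Fin 4 → ℝ))
    (l1 l2 l3 l4 l5 l6 : Fin 4 → ℝ)
    (hl1 : l1 ≠ 0) (hl2 : l2 ≠ 0) (hl3 : l3 ≠ 0) (hl4 : l4 ≠ 0)
    (hl5 : l5 ≠ 0) (hl6 : l6 ≠ 0)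
    (hf1 : ∀ i ∈ ({0,1,2,3} : Finset (Fin 8)), dp l1 (x i) = 0)
    (hf2 : ∀ i ∈ ({4,5,6,7} : Finset (Fin 8)), dp l2 (x i) = 0)
    (hf3 : ∀ i ∈ ({0,3,4,7} : Finset (Fin 8)), dp l3 (x i) = 0)
    (hf4 : ∀ i ∈ ({1,2,5,6} : Finset (Fin 8)), dp l4 (x i) = 0)
    (hf5 : ∀ i ∈ ({0,2,5,7} : Finset (Fin 8)), dp l5 (x i) = 0)
    (hf6 : ∀ i ∈ ({1,3,4,6} : Finset (Fin 8)), dp l6 (x i) = 0) :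
    ¬ LinearIndependent ℝ (vv x) := by
  intro H
  have hq12 : ∀ i, dp l1 (x i) * dp l2 (x i) = 0 := by
    intro i
    fin_cases i
    · exact mul_eq_zero_of_left (hf1 0 (by decide)) _
    · exact mul_eq_zero_of_left (hf1 1 (by decide)) _
    · exact mul_eq_zero_of_left (hf1 2 (by decide)) _
    · exact mul_eq_zero_of_left (hf1 3 (by decide)) _
    · exact mul_eq_zero_of_right _ (hf2 4 (by decide))
    · exact mul_eq_zero_of_right _ (hf2 5 (by decide))
    · exact mul_eq_zero_of_right _ (hf2 6 (by decide))
    · exact mul_eq_zero_of_right _ (hf2 7 (by decide))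
  have hq34 : ∀ i, dp l3 (x i) * dp l4 (x i) = 0 := by
    intro i
    fin_cases i
    · exact mul_eq_zero_of_left (hf3 0 (by decide)) _
    · exact mul_eq_zero_of_right _ (hf4 1 (by decide))
    · exact mul_eq_zero_of_right _ (hf4 2 (by decide))
    · exact mul_eq_zero_of_left (hf3 3 (by decide)) _
    · exact mul_eq_zero_of_left (hf3 4 (by decide)) _
    · exact mul_eq_zero_of_right _ (hf4 5 (by decide))
    · exact mul_eq_zero_of_right _ (hf4 6 (by decide))
    · exact mul_eq_zero_of_left (hf3 7 (by decide)) _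
  have hq56 : ∀ i, dp l5 (x i) * dp l6 (x i) = 0 := by
    intro i
    fin_cases i
    · exact mul_eq_zero_of_left (hf5 0 (by decide)) _
    · exact mul_eq_zero_of_right _ (hf6 1 (by decide))
    · exact mul_eq_zero_of_left (hf5 2 (by decide)) _
    · exact mul_eq_zero_of_right _ (hf6 3 (by decide))
    · exact mul_eq_zero_of_right _ (hf6 4 (by decide))
    · exact mul_eq_zero_of_left (hf5 5 (by decide)) _
    · exact mul_eq_zero_of_right _ (hf6 6 (by decide))
    · exact mul_eq_zero_of_left (hf5 7 (by decide)) _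
  by_cases hq : LinearIndependent ℝ (![qv l1 l2, qv l3 l4, qv l5 l6] : Fin 3 → V10)
  · have hrank := finrank_span_eq_card hq
    have hle := card_le_of_ortho x H
      (Submodule.span ℝ (Set.range (![qv l1 l2, qv l3 l4, qv l5 l6] : Fin 3 → V10)))
      Finset.univ ?_
    · rw [hrank] at hle
      simp [Finset.card_univ] at hle
    · intro i _ u hu
      induction hu using Submodule.span_induction with
      | mem u hu' =>
        obtain ⟨j, rfl⟩ := hu'
        fin_cases j
        · show (inner ℝ (vv x i) (qv l1 l2) : ℝ) = 0
          rw [inner_vv_qv]; exact hq12 i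
        · show (inner ℝ (vv x i) (qv l3 l4) : ℝ) = 0
          rw [inner_vv_qv]; exact hq34 i
        · show (inner ℝ (vv x i) (qv l5 l6) : ℝ) = 0
          rw [inner_vv_qv]; exact hq56 i
      | zero => exact inner_zero_right _
      | add u w _ _ ha hb => rw [inner_add_right, ha, hb]; ring
      | smul c u _ ha => rw [real_inner_smul_right, ha]; ring
  · rw [Fintype.not_linearIndependent_iff] at hq
    obtain ⟨g, hsum, j₀, hj₀⟩ := hq
    have hgid : ∀ y, g 0 * (dp l1 y * dp l2 y) + g 1 * (dp l3 y * dp l4 y)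
        + g 2 * (dp l5 y * dp l6 y) = 0 := by
      intro y
      have h0 := congrArg
        (fun z : V10 => (inner ℝ z (WithLp.toLp 2 (veronese y) : V10) : ℝ)) hsum
      simp only [inner_zero_left] at h0
      rw [sum_inner, Fin.sum_univ_three, mv0, mv1, mv2, real_inner_smul_left,
        real_inner_smul_left, real_inner_smul_left, inner_qv, inner_qv, inner_qv] at h0
      linarith
    by_cases hg2 : g 2 = 0
    · by_cases hg0 : g 0 = 0
      · by_cases hg1 : g 1 = 0
        · fin_cases j₀
          · exact hj₀ hg0
          · exact hj₀ hg1
          · exact hj₀ hg2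
        · have hzz : ∀ y, dp l3 y * dp l4 y = 0 := by
            intro y
            have h := hgid y
            rw [hg0, hg2, zero_mul, zero_mul, zero_add, add_zero] at h
            exact (mul_eq_zero.mp h).resolve_left hg1
          exact hl4 (FM0 hzz hl3)
      · by_cases hg1 : g 1 = 0
        · have hzz : ∀ y, dp l1 y * dp l2 y = 0 := by
            intro y
            have h := hgid y
            rw [hg1, hg2, zero_mul, zero_mul, add_zero, add_zero] at h
            exact (mul_eq_zero.mp h).resolve_left hg0
          exact hl2 (FM0 hzz hl1)
        · -- g 0, g 1 ≠ 0, g 2 = 0 : pairs (l1,l2) ~ (l3,l4), extra pair (l5,l6)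
          refine deg2 x H l1 l2 l3 l4 l5 l6 hl1 hl2 hl3 hl4 hl5 hl6
            {0,1,2,3} {4,5,6,7} {0,3,4,7} {1,2,5,6} {0,2,5,7} {1,3,4,6}
            hf1 hf2 hf3 hf4 hf5 hf6 (-(g 1 / g 0)) ?_ ?_ hq56
            (by decide) (by decide) (by decide) (by decide) (by decide)
            (by decide) (by decide)
          · simp [hg0, hg1]
          · intro y
            have h := hgid y
            rw [hg2, zero_mul, add_zero] at h
            field_simp
            linarith
    · by_cases hg0 : g 0 = 0
      · by_cases hg1 : g 1 = 0
        · have hzz : ∀ y, dp l5 y * dp l6 y = 0 := by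
            intro y
            have h := hgid y
            rw [hg0, hg1, zero_mul, zero_mul, zero_add, zero_add] at h
            exact (mul_eq_zero.mp h).resolve_left hg2
          exact hl6 (FM0 hzz hl5)
        · -- g 1, g 2 ≠ 0, g 0 = 0 : pairs (l3,l4) ~ (l5,l6), extra pair (l1,l2)
          refine deg2 x H l3 l4 l5 l6 l1 l2 hl3 hl4 hl5 hl6 hl1 hl2
            {0,3,4,7} {1,2,5,6} {0,2,5,7} {1,3,4,6} {0,1,2,3} {4,5,6,7}
            hf3 hf4 hf5 hf6 hf1 hf2 (-(g 2 / g 1)) ?_ ?_ hq12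
            (by decide) (by decide) (by decide) (by decide) (by decide)
            (by decide) (by decide)
          · simp [hg1, hg2]
          · intro y
            have h := hgid y
            rw [hg0, zero_mul, zero_add] at h
            field_simp
            linarith
      · by_cases hg1 : g 1 = 0
        · -- g 0, g 2 ≠ 0, g 1 = 0 : pairs (l1,l2) ~ (l5,l6), extra pair (l3,l4)
          refine deg2 x H l1 l2 l5 l6 l3 l4 hl1 hl2 hl5 hl6 hl3 hl4
            {0,1,2,3} {4,5,6,7} {0,2,5,7} {1,3,4,6} {0,3,4,7} {1,2,5,6}
            hf1 hf2 hf5 hf6 hf3 hf4 (-(g 2 / g 0)) ?_ ?_ hq34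
            (by decide) (by decide) (by decide) (by decide) (by decide)
            (by decide) (by decide)
          · simp [hg0, hg2]
          · intro y
            have h := hgid y
            rw [hg1, zero_mul, add_zero] at h
            field_simp
            linarith
        · -- all three nonzero
          refine deg3 x H l5 l6 l1 l2 l3 l4 hl5 hl6 hl1 hl2 hl3 hl4
            {0,2,5,7} {1,3,4,6} {0,1,2,3} {4,5,6,7} {0,3,4,7} {1,2,5,6}
            hf5 hf6 hf1 hf2 hf3 hf4 (-(g 0 / g 2)) (-(g 1 / g 2)) ?_ ?_ ?_ hq12
            (by decide) (by decide) (by decide) (by decide) (by decide)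
            (by decide) (by decide) (by decide) (by decide) (by decide)
            (by decide) (by decide)
          · simp [hg0, hg2]
          · simp [hg1, hg2]
          · intro y
            have h := hgid y
            field_simp
            linear_combination h
lemma face_functional (p0 p1 p2 p3 : Fin 4 → ℝ)
    (hdet : (Matrix.of ![p0, p1, p2, p3]).det = 0) :
    ∃ l : Fin 4 → ℝ, l ≠ 0 ∧ dp l p0 = 0 ∧ dp l p1 = 0 ∧ dp l p2 = 0 ∧ dp l p3 = 0 := by
  obtain ⟨v, hv, hveq⟩ := Matrix.exists_mulVec_eq_zero_iff.mpr hdet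
  refine ⟨v, hv, ?_, ?_, ?_, ?_⟩
  · have := congr_fun hveq 0
    simpa [Matrix.mulVec, dotProduct, dp, mul_comm] using this
  · have := congr_fun hveq 1
    simpa [Matrix.mulVec, dotProduct, dp, mul_comm] using this
  · have := congr_fun hveq 2
    simpa [Matrix.mulVec, dotProduct, dp, mul_comm] using this
  · have := congr_fun hveq 3
    simpa [Matrix.mulVec, dotProduct, dp, mul_comm] using this

end

end EightPt

theorem eight_point_defeated_by_cube
    (P : Fin 8 → Fin 3 → ℝ) (hP : IsCombinatorialCube P)
    (A₁ A₂ : Matrix (Fin 3) (Fin 4) ℝ)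
    (Z : Matrix (Fin 8) (Fin 3 × Fin 3) ℝ)
    (hZ : ∀ i jk, Z i jk = A₁.mulVec (hom3 (P i)) jk.1 * A₂.mulVec (hom3 (P i)) jk.2) :
    Z.rank ≤ 7 ∧ 2 ≤ Module.finrank ℝ (LinearMap.ker Z.mulVecLin) := by
  classical
  obtain ⟨d1, d2, d3, d4, d5, d6⟩ := hP
  set x : Fin 8 → (Fin 4 → ℝ) := fun i => hom3 (P i) with hx
  obtain ⟨l1, hl1, h1a, h1b, h1c, h1d⟩ := EightPt.face_functional _ _ _ _ d1
  obtain ⟨l2, hl2, h2a, h2b, h2c, h2d⟩ := EightPt.face_functional _ _ _ _ d2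
  obtain ⟨l3, hl3, h3a, h3b, h3c, h3d⟩ := EightPt.face_functional _ _ _ _ d3
  obtain ⟨l4, hl4, h4a, h4b, h4c, h4d⟩ := EightPt.face_functional _ _ _ _ d4
  obtain ⟨l5, hl5, h5a, h5b, h5c, h5d⟩ := EightPt.face_functional _ _ _ _ d5
  obtain ⟨l6, hl6, h6a, h6b, h6c, h6d⟩ := EightPt.face_functional _ _ _ _ d6
  have hNLI : ¬ LinearIndependent ℝ (EightPt.vv x) := by
    apply EightPt.core x l1 l2 l3 l4 l5 l6 hl1 hl2 hl3 hl4 hl5 hl6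
    · intro i hi; fin_cases hi
      exacts [h1a, h1b, h1c, h1d]
    · intro i hi; fin_cases hi
      exacts [h2a, h2b, h2c, h2d]
    · intro i hi; fin_cases hi
      exacts [h3a, h3b, h3c, h3d]
    · intro i hi; fin_cases hi
      exacts [h4a, h4b, h4c, h4d]
    · intro i hi; fin_cases hi
      exacts [h5a, h5b, h5c, h5d]
    · intro i hi; fin_cases hi
      exacts [h6a, h6b, h6c, h6d]
  rw [Fintype.not_linearIndependent_iff] at hNLI
  obtain ⟨c, hsum, j₀, hj₀⟩ := hNLI
  have hcomp : ∀ k : Fin 10, ∑ i, c i * veronese (x i) k = 0 := by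
    intro k
    have := congrArg (fun v : EightPt.V10 => v k) hsum
    simpa [EightPt.vv, Finset.sum_apply] using this
  have hab : ∀ a b : Fin 4, ∑ i, c i * (x i a * x i b) = 0 := by
    have e0 := hcomp 0; have e1 := hcomp 1; have e2 := hcomp 2; have e3 := hcomp 3
    have e4 := hcomp 4; have e5 := hcomp 5; have e6 := hcomp 6; have e7 := hcomp 7
    have e8 := hcomp 8; have e9 := hcomp 9
    simp only [veronese, Matrix.cons_val_zero, Matrix.cons_val_one, Matrix.head_cons,
      Matrix.cons_val_two, Matrix.cons_val_three, Matrix.cons_val_four,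
      EightPt.cons_val_5, EightPt.cons_val_6, EightPt.cons_val_7, EightPt.cons_val_8,
      EightPt.cons_val_9, Matrix.tail_cons, pow_two] at e0 e1 e2 e3 e4 e5 e6 e7 e8 e9
    have flip : ∀ a b : Fin 4, (∑ i, c i * (x i a * x i b)) = ∑ i, c i * (x i b * x i a) :=
      fun a b => Finset.sum_congr rfl (fun i _ => by ring)
    intro a b
    fin_cases a <;> fin_cases b
    · exact e0
    · exact e1
    · exact e2
    · exact e3
    · exact (flip 1 0).trans e1
    · exact e4
    · exact e5
    · exact e6
    · exact (flip 2 0).trans e2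
    · exact (flip 2 1).trans e5
    · exact e7
    · exact e8
    · exact (flip 3 0).trans e3
    · exact (flip 3 1).trans e6
    · exact (flip 3 2).trans e8
    · exact e9
  have hZs : ∀ jk : Fin 3 × Fin 3, ∑ i, c i * Z i jk = 0 := by
    intro jk
    have hrw : ∀ i, c i * Z i jk
        = ∑ a, ∑ b, A₁ jk.1 a * A₂ jk.2 b * (c i * (x i a * x i b)) := by
      intro i
      rw [hZ i jk]
      show c i * ((∑ a, A₁ jk.1 a * x i a) * (∑ b, A₂ jk.2 b * x i b)) = _
      rw [Finset.sum_mul_sum, Finset.mul_sum]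
      refine Finset.sum_congr rfl fun a _ => ?_
      rw [Finset.mul_sum]
      exact Finset.sum_congr rfl fun b _ => by ring
    calc ∑ i, c i * Z i jk
        = ∑ i, ∑ a, ∑ b, A₁ jk.1 a * A₂ jk.2 b * (c i * (x i a * x i b)) :=
          Finset.sum_congr rfl fun i _ => hrw i
      _ = ∑ a, ∑ i, ∑ b, A₁ jk.1 a * A₂ jk.2 b * (c i * (x i a * x i b)) :=
          Finset.sum_comm
      _ = ∑ a, ∑ b, ∑ i, A₁ jk.1 a * A₂ jk.2 b * (c i * (x i a * x i b)) :=
          Finset.sum_congr rfl fun a _ => Finset.sum_comm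
      _ = ∑ a, ∑ b, A₁ jk.1 a * A₂ jk.2 b * ∑ i, c i * (x i a * x i b) := by
          refine Finset.sum_congr rfl fun a _ => Finset.sum_congr rfl fun b _ => ?_
          rw [Finset.mul_sum]
      _ = 0 := by
          refine Finset.sum_eq_zero fun a _ => Finset.sum_eq_zero fun b _ => ?_
          rw [hab a b, mul_zero]
  have hkerc : Zᵀ.mulVec c = 0 := by
    funext jk
    have := hZs jk
    simp only [Matrix.mulVec, dotProduct, Matrix.transpose_apply, Pi.zero_apply]
    rw [← this]
    exact Finset.sum_congr rfl fun i _ => mul_comm _ _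
  have hcne : c ≠ 0 := by
    intro h
    rw [h] at hj₀
    exact hj₀ rfl
  have hrt : Zᵀ.rank ≤ 7 := by
    have hrn := LinearMap.finrank_range_add_finrank_ker (Zᵀ.mulVecLin)
    have hker_ne : LinearMap.ker (Zᵀ.mulVecLin) ≠ ⊥ := by
      intro hbot
      have hc : c ∈ LinearMap.ker (Zᵀ.mulVecLin) := by
        rw [LinearMap.mem_ker, Matrix.mulVecLin_apply, hkerc]
      rw [hbot, Submodule.mem_bot] at hc
      exact hcne hc
    have hpos : 0 < Module.finrank ℝ (LinearMap.ker (Zᵀ.mulVecLin)) := by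
      rcases Nat.eq_zero_or_pos (Module.finrank ℝ (LinearMap.ker (Zᵀ.mulVecLin))) with h0 | h
      · exact absurd (Submodule.finrank_eq_zero.mp h0) hker_ne
      · exact h
    rw [Module.finrank_fin_fun] at hrn
    have hdef : Zᵀ.rank = Module.finrank ℝ (LinearMap.range (Zᵀ.mulVecLin)) := rfl
    omega
  have h7 : Z.rank ≤ 7 := by
    rw [← Matrix.rank_transpose]
    exact hrt
  refine ⟨h7, ?_⟩
  have hrn2 := LinearMap.finrank_range_add_finrank_ker (Z.mulVecLin)
  have hdom : Module.finrank ℝ (Fin 3 × Fin 3 → ℝ) = 9 := by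
    rw [Module.finrank_fintype_fun_eq_card]
    simp
  rw [hdom] at hrn2
  have hdef : Z.rank = Module.finrank ℝ (LinearMap.range (Z.mulVecLin)) := rfl
  omega
end
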